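/- arXiv:1412.3680 — 6 statements merged into one kernel-verified Lean document; each statement's English description precedes it below -/
import Mathlib

section
/- Let S be a positive semidefinite n×n complex matrix, ψ ∈ ℂ^n a unit vector, π := ψψ*, and γ := ψ*Sψ − ψ*S(1−π)·((1−π)S(1−π))^+·(1−π)Sψ, where (·)^+ is the spectral pseudo-inverse. Then for every real number c, the matrix S − c·ψψ* is positive semidefinite if and only if c ≤ γ. In particular, if S is positive definite then γ = 1/⟨ψ, S^{−1}ψ⟩. -/
open Matrix
open scoped Kronecker ComplexOrder

noncomputable section

/-- A probability vector on a finite set. -/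
def ProbVec {X : Type*} [Fintype X] (p : X → ℝ) : Prop :=
  (∀ x, 0 ≤ p x) ∧ ∑ x, p x = 1

/-- A density matrix: positive semidefinite with trace one. -/
def IsDensityMatrix {n : ℕ} (ρ : Matrix (Fin n) (Fin n) ℂ) : Prop :=
  ρ.PosSemidef ∧ ρ.trace = 1

/-- The action of a classical-to-quantum channel, given by a family of density
matrices `ρ`, on a probability vector `p`. -/
def cqApply {X : Type*} [Fintype X] {n : ℕ} (ρ : X → Matrix (Fin n) (Fin n) ℂ)
    (p : X → ℝ) : Matrix (Fin n) (Fin n) ℂ :=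
  ∑ x, (p x : ℂ) • ρ x

/-- The recession slope `lim_{λ → ∞} f(λ)/λ`, as an extended real number.
(For convex continuous `f` the limit exists and equals this limsup.) -/
def recessionSlope (f : ℝ → ℝ) : EReal :=
  Filter.limsup (fun lam : ℝ => ((f lam / lam : ℝ) : EReal)) Filter.atTop

/-- The `f`-divergence of two probability vectors, valued in `ℝ ∪ {+∞}`
(with the convention `0 * ∞ = 0`, which holds for `EReal` multiplication). -/
def fDiv {X : Type*} [Fintype X] (f : ℝ → ℝ) (p0 p1 : X → ℝ) : EReal :=
  ((∑ x, if 0 < p1 x then p1 x * f (p0 x / p1 x) else 0 : ℝ) : EReal)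
    + ((∑ x, if 0 < p1 x then 0 else p0 x : ℝ) : EReal) * recessionSlope f

/-- The maximal `f`-divergence: the infimum of `D_f(q0‖q1)` over all classical
families mapped onto `(σ0, σ1)` by some classical-to-quantum channel. -/
def DfMax {n : ℕ} (f : ℝ → ℝ) (σ0 σ1 : Matrix (Fin n) (Fin n) ℂ) : EReal :=
  sInf { d : EReal |
    ∃ (m : ℕ) (q0 q1 : Fin m → ℝ) (ρ : Fin m → Matrix (Fin n) (Fin n) ℂ),
      ProbVec q0 ∧ ProbVec q1 ∧ (∀ x, IsDensityMatrix (ρ x)) ∧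
      cqApply ρ q0 = σ0 ∧ cqApply ρ q1 = σ1 ∧ d = fDiv f q0 q1 }

/-- Spectral functional calculus for Hermitian matrices (junk value `0` on
non-Hermitian input). -/
def hermCFC {n : ℕ} (f : ℝ → ℝ) (A : Matrix (Fin n) (Fin n) ℂ) :
    Matrix (Fin n) (Fin n) ℂ :=
  if hA : A.IsHermitian then
    (hA.eigenvectorUnitary : Matrix (Fin n) (Fin n) ℂ) *
      Matrix.diagonal (fun i => (f (hA.eigenvalues i) : ℂ)) *
      (star (hA.eigenvectorUnitary : Matrix (Fin n) (Fin n) ℂ))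
  else 0

/-- Spectral pseudo-inverse: invert the nonzero eigenvalues. -/
def pinvMat {n : ℕ} (A : Matrix (Fin n) (Fin n) ℂ) : Matrix (Fin n) (Fin n) ℂ :=
  hermCFC (fun x => if x = 0 then 0 else x⁻¹) A

/-- Orthogonal projection onto the range of a Hermitian matrix
(spectral projection onto the nonzero eigenvalues). -/
def rangeProj {n : ℕ} (A : Matrix (Fin n) (Fin n) ℂ) : Matrix (Fin n) (Fin n) ℂ :=
  hermCFC (fun x => if x = 0 then 0 else 1) A

/-- `A ↦ (A⁺)^{1/2}`, the square root of the spectral pseudo-inverse. -/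
def invSqrtMat {n : ℕ} (A : Matrix (Fin n) (Fin n) ℂ) : Matrix (Fin n) (Fin n) ℂ :=
  hermCFC (fun x => if x = 0 then 0 else (Real.sqrt x)⁻¹) A

/-- Generalized Schur complement of `σ0` with respect to a projection `π`:
`π σ0 π − π σ0 (1−π) · ((1−π) σ0 (1−π))⁺ · (1−π) σ0 π`. -/
def schurCompl {n : ℕ} (σ0 π : Matrix (Fin n) (Fin n) ℂ) :
    Matrix (Fin n) (Fin n) ℂ :=
  π * σ0 * π -
    (π * σ0 * (1 - π)) * pinvMat ((1 - π) * σ0 * (1 - π)) * ((1 - π) * σ0 * π)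

/-- `σ̃0`: the generalized Schur complement of `σ0` with respect to the
projection onto the range of `σ1`. -/
def sigmaTilde {n : ℕ} (σ0 σ1 : Matrix (Fin n) (Fin n) ℂ) :
    Matrix (Fin n) (Fin n) ℂ :=
  schurCompl σ0 (rangeProj σ1)

/-- The closed-form expression
`F_f(σ0,σ1) = tr σ1 f(σ1^{-1/2} σ̃0 σ1^{-1/2}) + (1 − tr σ̃0) L(f)`. -/
def Ff {n : ℕ} (f : ℝ → ℝ) (σ0 σ1 : Matrix (Fin n) (Fin n) ℂ) : EReal :=
  (((σ1 * hermCFC f (invSqrtMat σ1 * sigmaTilde σ0 σ1 * invSqrtMat σ1)).trace.re : ℝ) : EReal)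
    + ((1 - (sigmaTilde σ0 σ1).trace.re : ℝ) : EReal) * recessionSlope f

/-- Operator convexity of a function on `[0,∞)`, via the spectral functional
calculus on positive semidefinite complex matrices. -/
def OperatorConvex (f : ℝ → ℝ) : Prop :=
  ∀ (n : ℕ) (A B : Matrix (Fin n) (Fin n) ℂ), A.PosSemidef → B.PosSemidef →
    ∀ t : ℝ, 0 ≤ t → t ≤ 1 →
      (t • hermCFC f A + (1 - t) • hermCFC f B
        - hermCFC f (t • A + (1 - t) • B)).PosSemidef

/-- A CPTP map between matrix algebras: trace preserving and with positive
semidefinite Choi matrix. -/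
def IsCPTP {n k : ℕ}
    (Λ : Matrix (Fin n) (Fin n) ℂ →ₗ[ℂ] Matrix (Fin k) (Fin k) ℂ) : Prop :=
  (∀ A, (Λ A).trace = A.trace) ∧
    (∑ i : Fin n, ∑ j : Fin n,
      (Λ (Matrix.single i j 1)) ⊗ₖ (Matrix.single i j (1 : ℂ))).PosSemidef

/-- The largest eigenvalue of a Hermitian matrix (junk value `0` otherwise). -/
def lmax {k : ℕ} (W : Matrix (Fin k) (Fin k) ℂ) : ℝ :=
  if h : W.IsHermitian then ⨆ i, h.eigenvalues i else 0

/-- A stochastic matrix (`P y x` is the probability of `y` given `x`). -/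
def IsStochastic {X Y : Type*} [Fintype X] [Fintype Y] (P : Y → X → ℝ) : Prop :=
  (∀ y x, 0 ≤ P y x) ∧ ∀ x, ∑ y, P y x = 1

/-- The action of a stochastic matrix on a probability vector. -/
def stocApply {X Y : Type*} [Fintype X] [Fintype Y] (P : Y → X → ℝ)
    (p : X → ℝ) : Y → ℝ :=
  fun y => ∑ x, P y x * p x

end

/-- `γ = ψ*Sψ − ψ*S(1−π)·((1−π)S(1−π))⁺·(1−π)Sψ` where `π = ψψ*`. -/
noncomputable def gammaOf {n : ℕ} (S : Matrix (Fin n) (Fin n) ℂ) (ψ : Fin n → ℂ) : ℝ :=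
  (star ψ ⬝ᵥ S *ᵥ ψ -
    star ψ ⬝ᵥ ((S * (1 - vecMulVec ψ (star ψ)) *
      pinvMat ((1 - vecMulVec ψ (star ψ)) * S * (1 - vecMulVec ψ (star ψ))) *
      ((1 - vecMulVec ψ (star ψ)) * S)) *ᵥ ψ)).re

section SubProjAux
open Matrix
open scoped ComplexOrder

namespace SubProjAux

variable {n : ℕ}

lemma hermCFC_eq (f : ℝ → ℝ) {A : Matrix (Fin n) (Fin n) ℂ} (hA : A.IsHermitian) :
    hermCFC f A = (hA.eigenvectorUnitary : Matrix (Fin n) (Fin n) ℂ) *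
      Matrix.diagonal (fun i => (f (hA.eigenvalues i) : ℂ)) *
      (star (hA.eigenvectorUnitary : Matrix (Fin n) (Fin n) ℂ)) := dif_pos hA

lemma hermCFC_herm (f : ℝ → ℝ) {A : Matrix (Fin n) (Fin n) ℂ} (hA : A.IsHermitian) :
    (hermCFC f A).IsHermitian := by
  rw [hermCFC_eq f hA, star_eq_conjTranspose]
  apply isHermitian_mul_mul_conjTranspose
  have : star (fun i => (f (hA.eigenvalues i) : ℂ)) = fun i => (f (hA.eigenvalues i) : ℂ) := by
    funext i
    simp only [Pi.star_apply, Complex.star_def, Complex.conj_ofReal]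
  rw [IsHermitian, diagonal_conjTranspose, this]

lemma hermCFC_mul (f g : ℝ → ℝ) {A : Matrix (Fin n) (Fin n) ℂ} (hA : A.IsHermitian) :
    hermCFC f A * hermCFC g A = hermCFC (fun x => f x * g x) A := by
  have hU : ∀ X : Matrix (Fin n) (Fin n) ℂ,
      (star (hA.eigenvectorUnitary : Matrix (Fin n) (Fin n) ℂ)) *
        ((hA.eigenvectorUnitary : Matrix (Fin n) (Fin n) ℂ) * X) = X := by
    intro X
    rw [← Matrix.mul_assoc, mem_unitaryGroup_iff'.mp hA.eigenvectorUnitary.2, Matrix.one_mul]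
  rw [hermCFC_eq f hA, hermCFC_eq g hA, hermCFC_eq _ hA]
  simp only [Matrix.mul_assoc, hU]
  rw [← Matrix.mul_assoc (Matrix.diagonal _) (Matrix.diagonal _), diagonal_mul_diagonal]
  simp only [← Complex.ofReal_mul]

lemma hermCFC_sub (f g : ℝ → ℝ) {A : Matrix (Fin n) (Fin n) ℂ} (hA : A.IsHermitian) :
    hermCFC f A - hermCFC g A = hermCFC (fun x => f x - g x) A := by
  rw [hermCFC_eq f hA, hermCFC_eq g hA, hermCFC_eq _ hA, ← sub_mul, ← Matrix.mul_sub,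
    diagonal_sub]
  simp only [← Complex.ofReal_sub]

lemma hermCFC_id {A : Matrix (Fin n) (Fin n) ℂ} (hA : A.IsHermitian) :
    hermCFC (fun x => x) A = A := by
  rw [hermCFC_eq _ hA]
  conv_rhs => rw [hA.spectral_theorem]
  rfl

lemma hermCFC_one {A : Matrix (Fin n) (Fin n) ℂ} (hA : A.IsHermitian) :
    hermCFC (fun _ => 1) A = 1 := by
  rw [hermCFC_eq _ hA]
  simp only [Complex.ofReal_one, diagonal_one, Matrix.mul_one]
  exact mem_unitaryGroup_iff.mp hA.eigenvectorUnitary.2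

lemma hermCFC_congr {f g : ℝ → ℝ} (A : Matrix (Fin n) (Fin n) ℂ)
    (h : ∀ x, f x = g x) : hermCFC f A = hermCFC g A := by
  rw [funext h]

lemma dot_shift (M : Matrix (Fin n) (Fin n) ℂ) (x y : Fin n → ℂ) :
    star (M *ᵥ x) ⬝ᵥ y = star x ⬝ᵥ Mᴴ *ᵥ y := by
  rw [star_mulVec, dotProduct_mulVec]

lemma herm_quad_real {M : Matrix (Fin n) (Fin n) ℂ} (hM : M.IsHermitian) (x : Fin n → ℂ) :
    (((star x ⬝ᵥ M *ᵥ x).re : ℝ) : ℂ) = star x ⬝ᵥ M *ᵥ x := by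
  apply Complex.conj_eq_iff_re.mp
  have h0 : (starRingEnd ℂ) (star x ⬝ᵥ M *ᵥ x) = star (star x ⬝ᵥ M *ᵥ x) := rfl
  have h1 : star (M *ᵥ x) ⬝ᵥ x = star (star x ⬝ᵥ M *ᵥ x) := star_dotProduct _ _
  have h2 : star (M *ᵥ x) ⬝ᵥ x = star x ⬝ᵥ M *ᵥ x := by rw [dot_shift, hM.eq]
  rw [h0, ← h1, h2]

end SubProjAux

end SubProjAux

set_option maxHeartbeats 1000000 in
/-- `S − c·ψψ*` is positive semidefinite iff `c ≤ γ`; and if `S`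
is positive definite then `γ = 1/⟨ψ, S⁻¹ψ⟩`. -/
theorem sub_smul_proj_posSemidef_iff {n : ℕ} (S : Matrix (Fin n) (Fin n) ℂ)
    (hS : S.PosSemidef) (ψ : Fin n → ℂ) (hψ : star ψ ⬝ᵥ ψ = 1) :
    (∀ c : ℝ, (S - (c : ℂ) • vecMulVec ψ (star ψ)).PosSemidef ↔ c ≤ gammaOf S ψ) ∧
      (S.PosDef → gammaOf S ψ = 1 / (star ψ ⬝ᵥ S⁻¹ *ᵥ ψ).re) := by
  classical
  open SubProjAux in
  set π : Matrix (Fin n) (Fin n) ℂ := vecMulVec ψ (star ψ) with hπdef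
  set Q : Matrix (Fin n) (Fin n) ℂ := 1 - π with hQdef
  set B : Matrix (Fin n) (Fin n) ℂ := Q * S * Q with hBdef
  set K : Matrix (Fin n) (Fin n) ℂ := pinvMat B with hKdef
  set z : Fin n → ℂ := (Q * S) *ᵥ ψ with hzdef
  -- basic facts about π and Q
  have hπx : ∀ x : Fin n → ℂ, π *ᵥ x = (star ψ ⬝ᵥ x) • ψ := by
    intro x
    funext i
    simp only [hπdef, mulVec, dotProduct, vecMulVec_apply, Pi.smul_apply, smul_eq_mul]
    rw [Finset.sum_mul]
    exact Finset.sum_congr rfl fun j _ => by ring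
  have hπH : π.IsHermitian := by
    show πᴴ = π
    funext i j
    simp only [hπdef, conjTranspose_apply, vecMulVec_apply, Pi.star_apply, star_mul',
      star_star]
    ring
  have hQH : Q.IsHermitian := by
    rw [hQdef]
    exact (isHermitian_one).sub hπH
  have hππ : π * π = π := by
    funext i j
    simp only [hπdef, Matrix.mul_apply, vecMulVec_apply]
    have h1 : ∑ k, ψ i * (star ψ) k * (ψ k * (star ψ) j)
        = (ψ i * (star ψ) j) * (star ψ ⬝ᵥ ψ) := by
      rw [dotProduct, Finset.mul_sum]
      exact Finset.sum_congr rfl fun k _ => by ring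
    rw [h1, hψ, mul_one]
  have hQQ : Q * Q = Q := by
    rw [hQdef, sub_mul, mul_sub, mul_sub, hππ]
    simp only [one_mul, mul_one]
    abel
  have hπψ : π *ᵥ ψ = ψ := by rw [hπx, hψ, one_smul]
  have hQψ : Q *ᵥ ψ = 0 := by
    rw [hQdef, Matrix.sub_mulVec, Matrix.one_mulVec, hπψ, sub_self]
  have hπadj : ∀ x : Fin n → ℂ, star x ⬝ᵥ π *ᵥ x
      = (star ψ ⬝ᵥ x) * star (star ψ ⬝ᵥ x) := by
    intro x
    rw [hπx, dotProduct_smul, smul_eq_mul, star_dotProduct x ψ]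
  have hQB : Q * B = B := by
    rw [hBdef]
    simp only [← Matrix.mul_assoc]
    rw [hQQ]
  have hBQ : B * Q = B := by rw [hBdef, Matrix.mul_assoc (Q * S) Q Q, hQQ]
  -- B is Hermitian PSD
  have hBH : B.IsHermitian := by
    show Bᴴ = B
    rw [hBdef, conjTranspose_mul, conjTranspose_mul, hQH.eq, hS.1.eq, Matrix.mul_assoc]
  have hBpsd : B.PosSemidef := by
    have h := hS.mul_mul_conjTranspose_same Q
    rwa [hQH.eq] at h
  -- functional calculus facts
  have hBcfc : B = hermCFC (fun x => x) B := (hermCFC_id hBH).symm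
  have hKcfc : K = hermCFC (fun x => if x = 0 then (0:ℝ) else x⁻¹) B := hKdef
  have hKH : K.IsHermitian := by rw [hKcfc]; exact hermCFC_herm _ hBH
  have hBK : B * K = hermCFC (fun x => if x = 0 then (0:ℝ) else 1) B := by
    calc B * K = hermCFC (fun x => x) B *
        hermCFC (fun x => if x = 0 then (0:ℝ) else x⁻¹) B := by rw [← hBcfc, ← hKcfc]
      _ = _ := by
        rw [hermCFC_mul _ _ hBH]
        apply hermCFC_congr
        intro x
        by_cases hx : x = 0
        · simp [hx]
        · simp [hx, mul_inv_cancel₀ hx]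
  have hBBK : B * B * K = B := by
    calc B * B * K = (B * B) * K := rfl
      _ = hermCFC (fun x => x * x) B * hermCFC (fun x => if x = 0 then (0:ℝ) else x⁻¹) B := by
          conv_lhs => rw [hBcfc, hKcfc]
          rw [hermCFC_mul _ _ hBH]
      _ = hermCFC (fun x => x) B := by
          rw [hermCFC_mul _ _ hBH]
          apply hermCFC_congr
          intro x
          by_cases hx : x = 0
          · simp [hx]
          · simp only [if_neg hx]
            rw [mul_assoc, mul_inv_cancel₀ hx, mul_one]
      _ = B := hermCFC_id hBH
  have hKKB : K * K * B = K := by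
    calc K * K * B
        = hermCFC (fun x => (if x = 0 then (0:ℝ) else x⁻¹) * (if x = 0 then (0:ℝ) else x⁻¹)) B
            * hermCFC (fun x => x) B := by
          conv_lhs => rw [hBcfc, hKcfc]
          rw [hermCFC_mul _ _ hBH]
      _ = K := by
          rw [hermCFC_mul _ _ hBH, hKcfc]
          apply hermCFC_congr
          intro x
          by_cases hx : x = 0
          · simp [hx]
          · simp only [if_neg hx]
            rw [mul_assoc, inv_mul_cancel₀ hx, mul_one]
  have hBψ : B *ᵥ ψ = 0 := by
    rw [hBdef, Matrix.mul_assoc, ← Matrix.mulVec_mulVec, ← Matrix.mulVec_mulVec, hQψ,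
      Matrix.mulVec_zero, Matrix.mulVec_zero]
  have hKψ : K *ᵥ ψ = 0 := by
    rw [← hKKB, ← Matrix.mulVec_mulVec, hBψ, Matrix.mulVec_zero]
  -- z is orthogonal to ker B, hence (B * K) z = z
  have hz_perp : ∀ w : Fin n → ℂ, B *ᵥ w = 0 → star z ⬝ᵥ w = 0 := by
    intro w hw
    have h1 : star w ⬝ᵥ B *ᵥ w = 0 := by rw [hw, dotProduct_zero]
    have h2 : star (Q *ᵥ w) ⬝ᵥ S *ᵥ (Q *ᵥ w) = 0 := by
      rw [dot_shift, hQH.eq, Matrix.mulVec_mulVec, Matrix.mulVec_mulVec, ← hBdef]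
      exact h1
    have h3 : S *ᵥ (Q *ᵥ w) = 0 := (hS.dotProduct_mulVec_zero_iff _).mp h2
    rw [hzdef, dot_shift, conjTranspose_mul, hQH.eq, hS.1.eq, ← Matrix.mulVec_mulVec, h3,
      dotProduct_zero]
  have hPz : (B * K) *ᵥ z = z := by
    have hRcfc : 1 - B * K = hermCFC (fun x => (1:ℝ) - (if x = 0 then (0:ℝ) else 1)) B := by
      rw [hBK, ← hermCFC_sub _ _ hBH, hermCFC_one hBH]
    have hRH : (1 - B * K).IsHermitian := by rw [hRcfc]; exact hermCFC_herm _ hBH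
    have hRR : (1 - B * K) * (1 - B * K) = 1 - B * K := by
      rw [hRcfc, hermCFC_mul _ _ hBH]
      apply hermCFC_congr
      intro x
      by_cases hx : x = 0 <;> simp [hx]
    have hBR : B * (1 - B * K) = 0 := by
      rw [mul_sub, mul_one, ← Matrix.mul_assoc, hBBK, sub_self]
    have h0 : star z ⬝ᵥ ((1 - B * K) *ᵥ z) = 0 := by
      apply hz_perp
      rw [Matrix.mulVec_mulVec, hBR, Matrix.zero_mulVec]
    have h1 : star ((1 - B * K) *ᵥ z) ⬝ᵥ ((1 - B * K) *ᵥ z) = 0 := by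
      rw [dot_shift, hRH.eq, Matrix.mulVec_mulVec, hRR]
      exact h0
    have h2 : (1 - B * K) *ᵥ z = 0 := dotProduct_star_self_eq_zero.mp h1
    rw [Matrix.sub_mulVec, Matrix.one_mulVec, sub_eq_zero] at h2
    exact h2.symm
  -- recurring dot-product identities
  have hQSH : (Q * S)ᴴ = S * Q := by rw [conjTranspose_mul, hQH.eq, hS.1.eq]
  have hzd : ∀ y : Fin n → ℂ, star z ⬝ᵥ y = star ψ ⬝ᵥ (S * Q) *ᵥ y := by
    intro y
    rw [hzdef, dot_shift, hQSH]
  have eQz : Q *ᵥ z = z := by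
    rw [hzdef, Matrix.mulVec_mulVec, ← Matrix.mul_assoc, hQQ]
  have e5 : ∀ x : Fin n → ℂ, star (K *ᵥ z) ⬝ᵥ B *ᵥ x = star z ⬝ᵥ x := by
    intro x
    rw [dot_shift K z _, hKH.eq, Matrix.mulVec_mulVec]
    have h := dot_shift ((K * B)ᴴ) z x
    rw [conjTranspose_conjTranspose] at h
    rw [← h, conjTranspose_mul, hKH.eq, hBH.eq, hPz]
  -- the key quadratic identity
  set γc : ℂ := star ψ ⬝ᵥ S *ᵥ ψ - star z ⬝ᵥ K *ᵥ z with hγcdef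
  have key : ∀ v : Fin n → ℂ,
      star v ⬝ᵥ S *ᵥ v
        = γc * ((star ψ ⬝ᵥ v) * star (star ψ ⬝ᵥ v))
          + star (Q *ᵥ v + (star ψ ⬝ᵥ v) • (K *ᵥ z)) ⬝ᵥ
              B *ᵥ (Q *ᵥ v + (star ψ ⬝ᵥ v) • (K *ᵥ z)) := by
    intro v
    have hv : v = (star ψ ⬝ᵥ v) • ψ + Q *ᵥ v := by
      rw [hQdef, Matrix.sub_mulVec, Matrix.one_mulVec, hπx]
      abel
    have hQQv : Q *ᵥ (Q *ᵥ v) = Q *ᵥ v := by rw [Matrix.mulVec_mulVec, hQQ]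
    have eSw : star ψ ⬝ᵥ S *ᵥ (Q *ᵥ v) = star z ⬝ᵥ (Q *ᵥ v) := by
      rw [hzd, ← Matrix.mulVec_mulVec, hQQv]
    have ewS : star (Q *ᵥ v) ⬝ᵥ S *ᵥ ψ = star (Q *ᵥ v) ⬝ᵥ z := by
      rw [dot_shift Q v (S *ᵥ ψ), dot_shift Q v z, hQH.eq]
      congr 1
      rw [eQz, Matrix.mulVec_mulVec, ← hzdef]
    have eww : star (Q *ᵥ v) ⬝ᵥ S *ᵥ (Q *ᵥ v) = star (Q *ᵥ v) ⬝ᵥ B *ᵥ (Q *ᵥ v) := by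
      rw [dot_shift Q v (S *ᵥ (Q *ᵥ v)), dot_shift Q v (B *ᵥ (Q *ᵥ v)), hQH.eq]
      congr 1
      simp only [Matrix.mulVec_mulVec]
      rw [hBQ, hQB, ← Matrix.mul_assoc, ← hBdef]
    have e4 : star (Q *ᵥ v) ⬝ᵥ B *ᵥ (K *ᵥ z) = star (Q *ᵥ v) ⬝ᵥ z := by
      congr 1
      rw [Matrix.mulVec_mulVec, hPz]
    have e6 : star (K *ᵥ z) ⬝ᵥ B *ᵥ (K *ᵥ z) = star z ⬝ᵥ K *ᵥ z := e5 _
    conv_lhs => rw [hv]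
    simp only [star_add, star_smul, add_dotProduct, dotProduct_add, Matrix.mulVec_add,
      Matrix.mulVec_smul, smul_dotProduct, dotProduct_smul, smul_eq_mul]
    rw [eSw, ewS, eww, e4, e5 (Q *ᵥ v), e6, hγcdef]
    ring
  -- quadratic form of S - c • π
  have hsub : ∀ (c : ℝ) (x : Fin n → ℂ),
      star x ⬝ᵥ (S - (c : ℂ) • π) *ᵥ x
        = star x ⬝ᵥ S *ᵥ x - (c : ℂ) * ((star ψ ⬝ᵥ x) * star (star ψ ⬝ᵥ x)) := by
    intro c x
    rw [Matrix.sub_mulVec, dotProduct_sub, Matrix.smul_mulVec, dotProduct_smul,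
      smul_eq_mul, hπadj]
  -- γc is the real number gammaOf S ψ
  have hgOf : ((gammaOf S ψ : ℝ) : ℂ) = γc := by
    have e : star ψ ⬝ᵥ ((S * Q * pinvMat (Q * S * Q) * (Q * S)) *ᵥ ψ) = star z ⬝ᵥ K *ᵥ z := by
      rw [hzd (K *ᵥ z)]
      congr 1
      rw [← Matrix.mulVec_mulVec, ← Matrix.mulVec_mulVec, ← hzdef, ← hBdef, ← hKdef]
    have hre : gammaOf S ψ = (star ψ ⬝ᵥ S *ᵥ ψ).re - (star z ⬝ᵥ K *ᵥ z).re := by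
      rw [gammaOf, ← hπdef, ← hQdef, Complex.sub_re, e]
    rw [hre, hγcdef, Complex.ofReal_sub, herm_quad_real hS.1 ψ, herm_quad_real hKH z]
  -- part 1
  have part1 : ∀ c : ℝ, (S - (c : ℂ) • π).PosSemidef ↔ c ≤ gammaOf S ψ := by
    intro c
    constructor
    · intro h
      have hv0 := h.dotProduct_mulVec_nonneg (ψ - K *ᵥ z)
      have ha0 : star ψ ⬝ᵥ (ψ - K *ᵥ z) = 1 := by
        rw [dotProduct_sub, hψ]
        have : star ψ ⬝ᵥ K *ᵥ z = 0 := by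
          have hd := dot_shift K ψ z
          rw [hKψ, hKH.eq, star_zero, zero_dotProduct] at hd
          rw [← hd]
        rw [this, sub_zero]
      have hu0 : Q *ᵥ (ψ - K *ᵥ z) + (star ψ ⬝ᵥ (ψ - K *ᵥ z)) • (K *ᵥ z) = 0 := by
        rw [ha0, one_smul, Matrix.mulVec_sub, hQψ]
        have hQKz : Q *ᵥ (K *ᵥ z) = K *ᵥ z := by
          rw [hQdef, Matrix.sub_mulVec, Matrix.one_mulVec, hπx]
          have : star ψ ⬝ᵥ K *ᵥ z = 0 := by
            have hd := dot_shift K ψ z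
            rw [hKψ, hKH.eq, star_zero, zero_dotProduct] at hd
            rw [← hd]
          rw [this, zero_smul, sub_zero]
        rw [hQKz]
        abel
      rw [hsub, key, hu0, ha0] at hv0
      simp only [Matrix.mulVec_zero, dotProduct_zero, star_one, mul_one, add_zero] at hv0
      rw [← hgOf] at hv0
      have : (0:ℂ) ≤ ((gammaOf S ψ - c : ℝ) : ℂ) := by
        convert hv0 using 1
        push_cast
        ring
      have := Complex.zero_le_real.mp this
      linarith
    · intro hc
      rw [posSemidef_iff_dotProduct_mulVec]
      constructor
      · apply hS.1.sub
        show ((c : ℂ) • π)ᴴ = (c : ℂ) • π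
        rw [conjTranspose_smul, hπH.eq, Complex.star_def, Complex.conj_ofReal]
      · intro x
        rw [hsub, key x]
        have h1 : (0:ℂ) ≤ γc * ((star ψ ⬝ᵥ x) * star (star ψ ⬝ᵥ x))
            - (c : ℂ) * ((star ψ ⬝ᵥ x) * star (star ψ ⬝ᵥ x)) := by
          have hmc : (star ψ ⬝ᵥ x) * star (star ψ ⬝ᵥ x)
              = ((Complex.normSq (star ψ ⬝ᵥ x) : ℝ) : ℂ) := by
            rw [Complex.star_def, Complex.mul_conj]
          rw [← hgOf, hmc, ← sub_mul, ← Complex.ofReal_sub, ← Complex.ofReal_mul]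
          exact Complex.zero_le_real.mpr
            (mul_nonneg (by linarith) (Complex.normSq_nonneg _))
        have h2 : (0:ℂ) ≤ star (Q *ᵥ x + (star ψ ⬝ᵥ x) • (K *ᵥ z)) ⬝ᵥ
            B *ᵥ (Q *ᵥ x + (star ψ ⬝ᵥ x) • (K *ᵥ z)) := hBpsd.dotProduct_mulVec_nonneg _
        calc (0:ℂ) ≤ (γc * ((star ψ ⬝ᵥ x) * star (star ψ ⬝ᵥ x))
              - (c : ℂ) * ((star ψ ⬝ᵥ x) * star (star ψ ⬝ᵥ x)))
            + star (Q *ᵥ x + (star ψ ⬝ᵥ x) • (K *ᵥ z)) ⬝ᵥ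
              B *ᵥ (Q *ᵥ x + (star ψ ⬝ᵥ x) • (K *ᵥ z)) := add_nonneg h1 h2
          _ = _ := by ring
  refine ⟨part1, ?_⟩
  -- part 2
  intro hSd
  have hInv : (S⁻¹).PosDef := hSd.inv
  have hψ0 : ψ ≠ 0 := by
    intro h
    rw [h, star_zero, zero_dotProduct] at hψ
    exact zero_ne_one hψ
  set t : ℂ := star ψ ⬝ᵥ S⁻¹ *ᵥ ψ with htdef
  have ht : ((t.re : ℝ) : ℂ) = t := herm_quad_real hInv.1 ψ
  have hr : 0 < t.re := by
    have := hInv.re_dotProduct_pos hψ0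
    simpa using this
  have ht0 : t ≠ 0 := by
    intro h
    rw [h] at ht
    simp only [Complex.zero_re, Complex.ofReal_zero] at ht
    rw [h] at hr
    simp at hr
  have hdet : IsUnit S.det := hSd.det_pos.ne'.isUnit
  have hSS : S⁻¹ * S = 1 := Matrix.nonsing_inv_mul S hdet
  have hS1 : S * S⁻¹ = 1 := Matrix.mul_nonsing_inv S hdet
  set w : Fin n → ℂ := S⁻¹ *ᵥ ψ with hwdef
  have hwS : ∀ x : Fin n → ℂ, star w ⬝ᵥ S *ᵥ x = star ψ ⬝ᵥ x := by
    intro x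
    rw [hwdef, dot_shift, hInv.1.eq, Matrix.mulVec_mulVec, hSS, Matrix.one_mulVec]
  have hSw : ∀ x : Fin n → ℂ, star x ⬝ᵥ S *ᵥ w = star x ⬝ᵥ ψ := by
    intro x
    rw [hwdef, Matrix.mulVec_mulVec, hS1, Matrix.one_mulVec]
  have hww : star w ⬝ᵥ S *ᵥ w = t := by rw [hwS, htdef, hwdef]
  -- Cauchy–Schwarz-type bound: S - (1/t.re) • π is PSD
  have hCS : (S - ((1 / t.re : ℝ) : ℂ) • π).PosSemidef := by
    rw [posSemidef_iff_dotProduct_mulVec]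
    constructor
    · apply hS.1.sub
      show (((1 / t.re : ℝ) : ℂ) • π)ᴴ = ((1 / t.re : ℝ) : ℂ) • π
      rw [conjTranspose_smul, hπH.eq, Complex.star_def, Complex.conj_ofReal]
    · intro x
      rw [hsub]
      set a : ℂ := star ψ ⬝ᵥ x with hadef
      have hexp : star x ⬝ᵥ S *ᵥ x - ((1 / t.re : ℝ) : ℂ) * (a * star a)
          = star (x - (a / t) • w) ⬝ᵥ S *ᵥ (x - (a / t) • w) := by
        simp only [star_sub, star_smul, sub_dotProduct, dotProduct_sub, Matrix.mulVec_sub,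
          Matrix.mulVec_smul, smul_dotProduct, dotProduct_smul, smul_eq_mul]
        rw [hwS x, hSw x, hww]
        rw [← hadef]
        have hsa : star (a / t) = star a / t := by
          rw [star_div₀, ← ht]
          simp [Complex.star_def, Complex.conj_ofReal]
        rw [hsa]
        have h1t : ((1 / t.re : ℝ) : ℂ) = 1 / t := by
          rw [← ht]
          push_cast
          rfl
        rw [h1t]
        have hsx : star x ⬝ᵥ ψ = star a := by
          rw [hadef, star_dotProduct x ψ]
        rw [hsx]
        field_simp
        ring
      rw [hexp]
      exact hS.dotProduct_mulVec_nonneg _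
  have hle1 : 1 / t.re ≤ gammaOf S ψ := (part1 _).mp hCS
  have hle2 : gammaOf S ψ ≤ 1 / t.re := by
    have hPSD := (part1 (gammaOf S ψ)).mpr le_rfl
    have h0 := hPSD.dotProduct_mulVec_nonneg w
    rw [hsub] at h0
    have haw : star ψ ⬝ᵥ w = t := by rw [hwdef, htdef]
    have hwSw : star w ⬝ᵥ S *ᵥ w = t := hww
    rw [hwSw, haw] at h0
    have hst : star t = t := by rw [← ht]; simp [Complex.star_def, Complex.conj_ofReal]
    rw [hst, ← ht] at h0
    have : (0:ℂ) ≤ ((t.re - gammaOf S ψ * (t.re * t.re) : ℝ) : ℂ) := by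
      convert h0 using 1
      push_cast
      ring
    have h1 := Complex.zero_le_real.mp this
    have hγr : gammaOf S ψ * t.re ≤ 1 := by nlinarith
    rw [le_div_iff₀ hr]
    exact hγr
  have := le_antisymm hle2 hle1
  rw [this, htdef]
end

section
/- Let p0, p1 be probability vectors on a finite set X and σ0, σ1 be n×n density matrices. A classical-to-quantum channel Γ with Γ(p0) = σ0 and Γ(p1) = σ1 exists if and only if for every k and every pair of Hermitian k×k matrices W0, W1, sup over all families (ρ_x)_{x∈X} of k×k density matrices of Σ_{θ∈{0,1}} Σ_{x∈X} p_θ(x)·tr(W_θ ρ_x) is at least sup over all CPTP maps Λ from n×n to k×k complex matrices of Σ_{θ∈{0,1}} tr(W_θ·Λ(σ_θ)). -/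
open Matrix
open scoped Kronecker ComplexOrder

section AuxLemmas

open Matrix
open scoped Kronecker ComplexOrder


lemma star_mul_self_re (z : ℂ) : ‖z‖ ^ 2 = (star z * z).re := by
  rw [Complex.star_def, ← Complex.normSq_eq_conj_mul_self, Complex.ofReal_re,
    Complex.normSq_eq_norm_sq]

lemma unitary_entry_norm_le {k : ℕ} (U : Matrix (Fin k) (Fin k) ℂ)
    (hU : star U * U = 1) (a i : Fin k) : ‖U a i‖ ≤ 1 := by
  have h1 : (star U * U) i i = 1 := by rw [hU]; simp
  rw [Matrix.mul_apply] at h1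
  have h2 : ∑ j, (‖U j i‖ ^ 2 : ℝ) = 1 := by
    have h := congrArg Complex.re h1
    rw [Complex.re_sum, Complex.one_re] at h
    rw [← h]
    exact Finset.sum_congr rfl fun j _ => by rw [Matrix.star_apply]; exact star_mul_self_re _
  have h3 : ‖U a i‖ ^ 2 ≤ 1 := by
    rw [← h2]
    exact Finset.single_le_sum (f := fun j => (‖U j i‖ ^ 2 : ℝ))
      (fun j _ => sq_nonneg _) (Finset.mem_univ a)
  nlinarith [norm_nonneg (U a i)]

lemma trace_mul_density_norm_le {k : ℕ} (W ρ : Matrix (Fin k) (Fin k) ℂ)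
    (hρ : ρ.PosSemidef ∧ ρ.trace = 1) :
    ‖(W * ρ).trace‖ ≤ ∑ a, ∑ b, ‖W a b‖ := by
  have hH : ρ.IsHermitian := hρ.1.1
  set U : Matrix (Fin k) (Fin k) ℂ := (hH.eigenvectorUnitary : Matrix (Fin k) (Fin k) ℂ) with hUdef
  have hUU : star U * U = 1 := (Matrix.mem_unitaryGroup_iff').mp hH.eigenvectorUnitary.2
  have hUU' : U * star U = 1 := (Matrix.mem_unitaryGroup_iff).mp hH.eigenvectorUnitary.2
  set d := hH.eigenvalues with hd
  have hspec : ρ = U * Matrix.diagonal (fun i => (d i : ℂ)) * star U := by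
    have h := hH.spectral_theorem
    simp at h
    exact h
  -- trace identity
  have key : (W * ρ).trace = ∑ i, (star U * W * U) i i * (d i : ℂ) := by
    rw [hspec]
    have : W * (U * Matrix.diagonal (fun i => (d i : ℂ)) * star U)
        = (W * U * Matrix.diagonal (fun i => (d i : ℂ))) * star U := by
      simp only [Matrix.mul_assoc]
    rw [this, Matrix.trace_mul_comm, ← Matrix.mul_assoc, ← Matrix.mul_assoc]
    rw [Matrix.trace]
    apply Finset.sum_congr rfl
    intro i _
    rw [Matrix.diag_apply, Matrix.mul_diagonal]
  -- eigenvalues sum to 1, nonneg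
  have hdnn : ∀ i, 0 ≤ d i := fun i => hρ.1.eigenvalues_nonneg i
  have hdsum : ∑ i, d i = 1 := by
    have ht : ρ.trace = ∑ i, (d i : ℂ) := by
      rw [hspec, Matrix.trace_mul_comm, ← Matrix.mul_assoc, hUU, Matrix.one_mul,
        Matrix.trace_diagonal]
    rw [hρ.2] at ht
    have := congrArg Complex.re ht.symm
    rw [Complex.re_sum, Complex.one_re] at this
    simpa using this
  -- entry bound for conjugated matrix
  have hent : ∀ i : Fin k, ‖(star U * W * U) i i‖ ≤ ∑ b, ∑ a, ‖W a b‖ := by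
    intro i
    rw [Matrix.mul_apply]
    refine le_trans (norm_sum_le _ _) ?_
    apply Finset.sum_le_sum
    intro b _
    rw [Matrix.mul_apply]
    calc ‖(∑ a, (star U) i a * W a b) * U b i‖
        ≤ (∑ a, ‖(star U) i a * W a b‖) * ‖U b i‖ := by
          rw [norm_mul]
          exact mul_le_mul_of_nonneg_right (norm_sum_le _ _) (norm_nonneg _)
      _ ≤ (∑ a, ‖W a b‖) * 1 := by
          apply mul_le_mul ?_ (unitary_entry_norm_le U hUU b i) (norm_nonneg _) ?_
          · apply Finset.sum_le_sum
            intro a _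
            rw [norm_mul, Matrix.star_apply, norm_star]
            calc ‖U a i‖ * ‖W a b‖ ≤ 1 * ‖W a b‖ :=
              mul_le_mul_of_nonneg_right (unitary_entry_norm_le U hUU a i) (norm_nonneg _)
            _ = ‖W a b‖ := one_mul _
          · exact Finset.sum_nonneg fun a _ => norm_nonneg _
      _ = ∑ a, ‖W a b‖ := mul_one _
  rw [key]
  calc ‖∑ i, (star U * W * U) i i * (d i : ℂ)‖
      ≤ ∑ i, ‖(star U * W * U) i i * (d i : ℂ)‖ := norm_sum_le _ _
    _ ≤ ∑ i, (∑ b, ∑ a, ‖W a b‖) * d i := by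
        apply Finset.sum_le_sum
        intro i _
        rw [norm_mul, Complex.norm_real, Real.norm_of_nonneg (hdnn i)]
        exact mul_le_mul_of_nonneg_right (hent i) (hdnn i)
    _ = ∑ b, ∑ a, ‖W a b‖ := by rw [← Finset.mul_sum, hdsum, mul_one]
    _ = ∑ a, ∑ b, ‖W a b‖ := Finset.sum_comm

lemma lin_expand {n k : ℕ} (Λ : Matrix (Fin n) (Fin n) ℂ →ₗ[ℂ] Matrix (Fin k) (Fin k) ℂ)
    (M : Matrix (Fin n) (Fin n) ℂ) :
    Λ M = ∑ i, ∑ j, M i j • Λ (Matrix.single i j 1) := by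
  conv_lhs => rw [Matrix.matrix_eq_sum_single M]
  rw [map_sum]
  refine Finset.sum_congr rfl fun i _ => ?_
  rw [map_sum]
  refine Finset.sum_congr rfl fun j _ => ?_
  rw [show Matrix.single i j (M i j) = M i j • Matrix.single i j 1 by
    rw [Matrix.smul_single, smul_eq_mul, mul_one], _root_.map_smul]

lemma choi_apply {n k : ℕ} (Λ : Matrix (Fin n) (Fin n) ℂ →ₗ[ℂ] Matrix (Fin k) (Fin k) ℂ)
    (a b : Fin k) (i j : Fin n) :
    (∑ i' : Fin n, ∑ j' : Fin n,
      (Λ (Matrix.single i' j' 1)) ⊗ₖ (Matrix.single i' j' (1 : ℂ))) (a, i) (b, j)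
      = Λ (Matrix.single i j 1) a b := by
  simp [Matrix.sum_apply, Matrix.kroneckerMap_apply, Matrix.single, ite_and,
    Finset.sum_ite_eq, Finset.sum_ite_eq']

lemma quad_expand {I : Type*} [Fintype I] (M : Matrix I I ℂ) (x : I → ℂ) :
    dotProduct (star x) (M *ᵥ x) = ∑ a, ∑ b, star (x a) * M a b * x b := by
  simp only [dotProduct, Matrix.mulVec, Pi.star_apply, Finset.mul_sum, mul_assoc]

lemma cp_posSemidef {n k : ℕ} (Λ : Matrix (Fin n) (Fin n) ℂ →ₗ[ℂ] Matrix (Fin k) (Fin k) ℂ)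
    (hChoi : (∑ i : Fin n, ∑ j : Fin n,
      (Λ (Matrix.single i j 1)) ⊗ₖ (Matrix.single i j (1 : ℂ))).PosSemidef)
    {ρ : Matrix (Fin n) (Fin n) ℂ} (hρ : ρ.PosSemidef) : (Λ ρ).PosSemidef := by
  set C := (∑ i : Fin n, ∑ j : Fin n,
      (Λ (Matrix.single i j 1)) ⊗ₖ (Matrix.single i j (1 : ℂ))) with hCdef
  have hCapp : ∀ (a : Fin k) (i : Fin n) (b : Fin k) (j : Fin n),
      C (a, i) (b, j) = Λ (Matrix.single i j 1) a b := by
    intro a i b j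
    rw [hCdef]
    exact choi_apply Λ a b i j
  have hsym : ∀ (i j : Fin n) (a b : Fin k),
      star (Λ (Matrix.single j i 1) b a) = Λ (Matrix.single i j 1) a b := by
    intro i j a b
    have h1 : star (C (b, j) (a, i)) = C (a, i) (b, j) := by
      have := congrFun (congrFun hChoi.1 (a, i)) (b, j)
      rwa [Matrix.conjTranspose_apply] at this
    rwa [hCapp, hCapp] at h1
  refine Matrix.PosSemidef.of_dotProduct_mulVec_nonneg ?_ ?_
  · -- Hermitian
    show (Λ ρ)ᴴ = Λ ρ
    rw [lin_expand Λ ρ]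
    ext a b
    rw [Matrix.conjTranspose_apply]
    simp only [Matrix.sum_apply, Matrix.smul_apply, star_sum, star_smul, smul_eq_mul]
    rw [Finset.sum_comm]
    refine Finset.sum_congr rfl fun i _ => Finset.sum_congr rfl fun j _ => ?_
    rw [star_mul', hsym i j a b]
    congr 1
    have := congrFun (congrFun hρ.1 j) i
    rw [Matrix.conjTranspose_apply] at this
    rw [← this, star_star]
  · -- quadratic form
    intro x
    obtain ⟨B, hB⟩ : ∃ B : Matrix (Fin n) (Fin n) ℂ, ρᵀ = Bᴴ * B := by
      open scoped MatrixOrder in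
      exact ⟨CFC.sqrt ρᵀ, by
        rw [(CFC.sqrt_nonneg ρᵀ).posSemidef.1.eq, CFC.sqrt_mul_sqrt_self ρᵀ hρ.transpose.nonneg]⟩
    have hBρ : ∀ i j, ρ i j = ∑ m, B m i * star (B m j) := by
      intro i j
      have h1 : ρᵀ i j = ∑ m, star (B m i) * B m j := by
        rw [hB, Matrix.mul_apply]
        exact Finset.sum_congr rfl fun m _ => by rw [Matrix.conjTranspose_apply]
      have h2 : ρ i j = star (ρᵀ i j) := by
        rw [Matrix.transpose_apply]
        have := congrFun (congrFun hρ.1 i) j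
        rw [Matrix.conjTranspose_apply] at this
        rw [← this]
      rw [h2, h1, star_sum]
      exact Finset.sum_congr rfl fun m _ => by rw [star_mul', star_star]
    set w : Fin n → (Fin k × Fin n) → ℂ := fun m p => x p.1 * star (B m p.2) with hw
    set q : Fin n → Fin n → ℂ :=
      fun i j => ∑ a, ∑ b, star (x a) * Λ (Matrix.single i j 1) a b * x b with hq
    have hrhs : ∀ m, dotProduct (star (w m)) (C *ᵥ (w m))
        = ∑ i, ∑ j, (B m i * star (B m j)) * q i j := by
      intro m
      rw [quad_expand]
      rw [Fintype.sum_prod_type]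
      rw [Finset.sum_comm]
      refine Finset.sum_congr rfl fun i _ => ?_
      have hstep : ∀ a : Fin k, ∑ p : Fin k × Fin n,
          star (w m (a, i)) * C (a, i) p * w m p
          = ∑ j, ∑ b, (B m i * star (B m j)) *
              (star (x a) * Λ (Matrix.single i j 1) a b * x b) := by
        intro a
        rw [Fintype.sum_prod_type]
        rw [Finset.sum_comm]
        refine Finset.sum_congr rfl fun j _ => Finset.sum_congr rfl fun b _ => ?_
        rw [hCapp]
        simp only [hw, star_mul', star_star]
        ring
      calc ∑ a, ∑ p : Fin k × Fin n, star (w m (a, i)) * C (a, i) p * w m p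
          = ∑ a, ∑ j, ∑ b, (B m i * star (B m j)) *
              (star (x a) * Λ (Matrix.single i j 1) a b * x b) :=
            Finset.sum_congr rfl fun a _ => hstep a
        _ = ∑ j, ∑ a, ∑ b, (B m i * star (B m j)) *
              (star (x a) * Λ (Matrix.single i j 1) a b * x b) := Finset.sum_comm
        _ = ∑ j, (B m i * star (B m j)) * q i j := by
            refine Finset.sum_congr rfl fun j _ => ?_
            rw [hq, Finset.mul_sum]
            refine Finset.sum_congr rfl fun a _ => ?_
            rw [Finset.mul_sum]
    have key : dotProduct (star x) ((Λ ρ) *ᵥ x) = ∑ m, dotProduct (star (w m)) (C *ᵥ (w m)) := by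
      have hlhs : dotProduct (star x) ((Λ ρ) *ᵥ x) = ∑ i, ∑ j, ρ i j * q i j := by
        rw [quad_expand]
        have hentry : ∀ a b, (Λ ρ) a b
            = ∑ i, ∑ j, ρ i j * Λ (Matrix.single i j 1) a b := by
          intro a b
          rw [lin_expand Λ ρ]
          simp only [Matrix.sum_apply, Matrix.smul_apply, smul_eq_mul]
        calc ∑ a, ∑ b, star (x a) * (Λ ρ) a b * x b
            = ∑ a, ∑ b, ∑ i, ∑ j,
                ρ i j * (star (x a) * Λ (Matrix.single i j 1) a b * x b) := by
              refine Finset.sum_congr rfl fun a _ => Finset.sum_congr rfl fun b _ => ?_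
              rw [hentry a b, Finset.mul_sum, Finset.sum_mul]
              refine Finset.sum_congr rfl fun i _ => ?_
              rw [Finset.mul_sum, Finset.sum_mul]
              exact Finset.sum_congr rfl fun j _ => by ring
          _ = ∑ a, ∑ i, ∑ b, ∑ j,
                ρ i j * (star (x a) * Λ (Matrix.single i j 1) a b * x b) :=
              Finset.sum_congr rfl fun a _ => Finset.sum_comm
          _ = ∑ i, ∑ a, ∑ b, ∑ j,
                ρ i j * (star (x a) * Λ (Matrix.single i j 1) a b * x b) :=
              Finset.sum_comm
          _ = ∑ i, ∑ a, ∑ j, ∑ b,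
                ρ i j * (star (x a) * Λ (Matrix.single i j 1) a b * x b) :=
              Finset.sum_congr rfl fun a _ => Finset.sum_congr rfl fun _ _ => Finset.sum_comm
          _ = ∑ i, ∑ j, ∑ a, ∑ b,
                ρ i j * (star (x a) * Λ (Matrix.single i j 1) a b * x b) :=
              Finset.sum_congr rfl fun i _ => Finset.sum_comm
          _ = ∑ i, ∑ j, ρ i j * q i j := by
              refine Finset.sum_congr rfl fun i _ => Finset.sum_congr rfl fun j _ => ?_
              rw [hq, Finset.mul_sum]
              refine Finset.sum_congr rfl fun a _ => ?_
              rw [Finset.mul_sum]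
      rw [hlhs]
      calc ∑ i, ∑ j, ρ i j * q i j
          = ∑ i, ∑ j, ∑ m, (B m i * star (B m j)) * q i j := by
            refine Finset.sum_congr rfl fun i _ => Finset.sum_congr rfl fun j _ => ?_
            rw [hBρ i j, Finset.sum_mul]
        _ = ∑ i, ∑ m, ∑ j, (B m i * star (B m j)) * q i j :=
            Finset.sum_congr rfl fun i _ => Finset.sum_comm
        _ = ∑ m, ∑ i, ∑ j, (B m i * star (B m j)) * q i j := Finset.sum_comm
        _ = ∑ m, dotProduct (star (w m)) (C *ᵥ (w m)) :=
            Finset.sum_congr rfl fun m _ => (hrhs m).symm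
    rw [key]
    exact Finset.sum_nonneg fun m _ => hChoi.dotProduct_mulVec_nonneg (w m)

lemma smul_decomp {k : ℕ} (c : ℂ) (M : Matrix (Fin k) (Fin k) ℂ) :
    c • M = c.re • M + c.im • (Complex.I • M) := by
  rw [← Complex.coe_smul c.re M, ← Complex.coe_smul c.im _, smul_smul, ← add_smul,
    Complex.re_add_im]

/-- Any ℝ-linear functional on complex matrices is `A ↦ re (tr (W A))`. -/
lemma exists_repr_matrix {k : ℕ} (f : Matrix (Fin k) (Fin k) ℂ →ₗ[ℝ] ℝ) :
    ∃ W : Matrix (Fin k) (Fin k) ℂ, ∀ A, (W * A).trace.re = f A := by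
  refine ⟨Matrix.of fun i j =>
    (f (Matrix.single j i 1) : ℂ)
      - (f (Complex.I • Matrix.single j i 1) : ℂ) * Complex.I, fun A => ?_⟩
  have hA : A = ∑ j, ∑ i, ((A j i).re • Matrix.single j i 1
      + (A j i).im • (Complex.I • Matrix.single j i 1)) := by
    conv_lhs => rw [Matrix.matrix_eq_sum_single A]
    refine Finset.sum_congr rfl fun j _ => Finset.sum_congr rfl fun i _ => ?_
    have h1 : Matrix.single j i (A j i) = (A j i) • Matrix.single j i 1 := by
      rw [Matrix.smul_single, smul_eq_mul, mul_one]
    rw [h1, smul_decomp]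
  have hf : f A = ∑ j, ∑ i, ((A j i).re * f (Matrix.single j i 1)
      + (A j i).im * f (Complex.I • Matrix.single j i 1)) := by
    conv_lhs => rw [hA]
    rw [map_sum]
    refine Finset.sum_congr rfl fun j _ => ?_
    rw [map_sum]
    refine Finset.sum_congr rfl fun i _ => ?_
    rw [map_add, _root_.map_smul, _root_.map_smul, smul_eq_mul, smul_eq_mul]
  rw [hf, Matrix.trace, Complex.re_sum]
  rw [Finset.sum_comm]
  refine Finset.sum_congr rfl fun j _ => ?_
  rw [Matrix.diag_apply, Matrix.mul_apply, Complex.re_sum]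
  refine Finset.sum_congr rfl fun i _ => ?_
  simp only [Matrix.of_apply, sub_mul, Complex.sub_re, Complex.mul_re, Complex.ofReal_re,
    Complex.ofReal_im, Complex.mul_im, Complex.I_re, Complex.I_im]
  ring


lemma entry_continuous {k : ℕ} (i j : Fin k) :
    Continuous fun ρ : Matrix (Fin k) (Fin k) ℂ => ρ i j :=
  (continuous_apply j).comp (continuous_apply i)

lemma isClosed_density {k : ℕ} : IsClosed {ρ : Matrix (Fin k) (Fin k) ℂ | IsDensityMatrix ρ} := by
  have hset : {ρ : Matrix (Fin k) (Fin k) ℂ | IsDensityMatrix ρ}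
      = {ρ : Matrix (Fin k) (Fin k) ℂ | ρ.IsHermitian}
        ∩ ((⋂ x : Fin k → ℂ, {ρ : Matrix (Fin k) (Fin k) ℂ | 0 ≤ dotProduct (star x) (ρ *ᵥ x)})
          ∩ {ρ : Matrix (Fin k) (Fin k) ℂ | ρ.trace = 1}) := by
    ext ρ
    simp only [Set.mem_setOf_eq, Set.mem_inter_iff, Set.mem_iInter, IsDensityMatrix,
      Matrix.posSemidef_iff_dotProduct_mulVec]
    tauto
  rw [hset]
  have hquad : ∀ x : Fin k → ℂ,
      Continuous fun ρ : Matrix (Fin k) (Fin k) ℂ => dotProduct (star x) (ρ *ᵥ x) := by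
    intro x
    unfold dotProduct Matrix.mulVec
    simp only
    refine continuous_finset_sum _ fun i _ => Continuous.mul continuous_const ?_
    exact continuous_finset_sum _ fun j _ => ((entry_continuous i j).mul continuous_const)
  have hClosedCone : IsClosed {z : ℂ | 0 ≤ z} := by
    have : {z : ℂ | 0 ≤ z} = Complex.re ⁻¹' (Set.Ici 0) ∩ Complex.im ⁻¹' {0} := by
      ext z
      simp [Complex.le_def, eq_comm]
    rw [this]
    exact (isClosed_Ici.preimage Complex.continuous_re).inter
      (isClosed_singleton.preimage Complex.continuous_im)
  refine IsClosed.inter ?_ (IsClosed.inter ?_ ?_)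
  · have : Continuous fun ρ : Matrix (Fin k) (Fin k) ℂ => ρᴴ - ρ := by
      refine Continuous.sub ?_ continuous_id
      refine continuous_pi fun i => continuous_pi fun j => ?_
      exact (entry_continuous j i).star
    have h2 : {ρ : Matrix (Fin k) (Fin k) ℂ | ρ.IsHermitian}
        = (fun ρ : Matrix (Fin k) (Fin k) ℂ => ρᴴ - ρ) ⁻¹' {0} := by
      ext ρ
      simp [Matrix.IsHermitian, sub_eq_zero]
    rw [h2]
    exact isClosed_singleton.preimage this
  · exact isClosed_iInter fun x => hClosedCone.preimage (hquad x)
  · have : Continuous fun ρ : Matrix (Fin k) (Fin k) ℂ => ρ.trace :=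
      continuous_finset_sum _ fun i _ => entry_continuous i i
    exact (isClosed_singleton (x := (1:ℂ))).preimage this

lemma entry_norm_le_one {k : ℕ} {ρ : Matrix (Fin k) (Fin k) ℂ} (hρ : IsDensityMatrix ρ)
    (i j : Fin k) : ‖ρ i j‖ ≤ 1 := by
  have h := trace_mul_density_norm_le (Matrix.single j i 1) ρ hρ
  have h1 : (Matrix.single j i (1:ℂ) * ρ).trace = ρ i j := by
    simp [Matrix.trace, Matrix.mul_apply, Matrix.single, ite_and, Finset.sum_ite_eq,
      Finset.sum_ite_eq']
  have h2 : (∑ a : Fin k, ∑ b : Fin k, ‖Matrix.single j i (1:ℂ) a b‖) = 1 := by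
    simp [Matrix.single, ite_and, apply_ite, Finset.sum_ite_eq, Finset.sum_ite_eq']
  rwa [h1, h2] at h

lemma isCompact_density {k : ℕ} :
    IsCompact {ρ : Matrix (Fin k) (Fin k) ℂ | IsDensityMatrix ρ} := by
  have hsub : {ρ : Matrix (Fin k) (Fin k) ℂ | IsDensityMatrix ρ}
      ⊆ Set.pi Set.univ fun _ : Fin k => Set.pi Set.univ fun _ : Fin k =>
          Metric.closedBall (0 : ℂ) 1 := by
    intro ρ hρ
    intro i _
    intro j _
    simpa [Metric.mem_closedBall, dist_zero_right] using entry_norm_le_one hρ i j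
  have hcomp : IsCompact (Set.pi Set.univ fun _ : Fin k => Set.pi Set.univ fun _ : Fin k =>
      Metric.closedBall (0 : ℂ) 1) :=
    isCompact_univ_pi fun _ => isCompact_univ_pi fun _ => isCompact_closedBall _ _
  exact hcomp.of_isClosed_subset isClosed_density hsub


lemma trace_re_bound {k : ℕ} (W ρ : Matrix (Fin k) (Fin k) ℂ) (hρ : IsDensityMatrix ρ) :
    (W * ρ).trace.re ≤ ∑ a, ∑ b, ‖W a b‖ :=
  le_trans (Complex.re_le_norm _) (trace_mul_density_norm_le W ρ hρ)

lemma stdBasis_trace {k : ℕ} (i j : Fin k) (ρ : Matrix (Fin k) (Fin k) ℂ) :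
    (Matrix.single j i 1 * ρ).trace = ρ i j := by
  simp [Matrix.trace, Matrix.mul_apply, Matrix.single, ite_and, Finset.sum_ite_eq,
    Finset.sum_ite_eq']

lemma cptp_density {n k : ℕ} (Λ : Matrix (Fin n) (Fin n) ℂ →ₗ[ℂ] Matrix (Fin k) (Fin k) ℂ)
    (hΛ : IsCPTP Λ) {ρ : Matrix (Fin n) (Fin n) ℂ} (hρ : IsDensityMatrix ρ) :
    IsDensityMatrix (Λ ρ) :=
  ⟨cp_posSemidef Λ hΛ.2 hρ.1, by rw [hΛ.1, hρ.2]⟩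

lemma cq_map {X : Type*} [Fintype X] {n k : ℕ}
    (Λ : Matrix (Fin n) (Fin n) ℂ →ₗ[ℂ] Matrix (Fin k) (Fin k) ℂ)
    (ρ : X → Matrix (Fin n) (Fin n) ℂ) (p : X → ℝ) :
    Λ (cqApply ρ p) = cqApply (fun x => Λ (ρ x)) p := by
  unfold cqApply
  rw [map_sum]
  exact Finset.sum_congr rfl fun x _ => _root_.map_smul Λ _ _

lemma trace_cq {X : Type*} [Fintype X] {k : ℕ} (W : Matrix (Fin k) (Fin k) ℂ)
    (ρ : X → Matrix (Fin k) (Fin k) ℂ) (p : X → ℝ) :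
    (W * cqApply ρ p).trace.re = ∑ x, p x * (W * ρ x).trace.re := by
  unfold cqApply
  rw [Finset.mul_sum, Matrix.trace_sum, Complex.re_sum]
  refine Finset.sum_congr rfl fun x _ => ?_
  rw [mul_smul_comm, Matrix.trace_smul, smul_eq_mul]
  simp [Complex.mul_re]

lemma posSemidef_real_smul {k : ℕ} {t : ℝ} (ht : 0 ≤ t) {A : Matrix (Fin k) (Fin k) ℂ}
    (hA : A.PosSemidef) : ((t : ℂ) • A).PosSemidef := by
  refine Matrix.PosSemidef.of_dotProduct_mulVec_nonneg ?_ ?_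
  · show ((t : ℂ) • A)ᴴ = _
    rw [Matrix.conjTranspose_smul, Complex.star_def, Complex.conj_ofReal, hA.1]
  · intro x
    rw [Matrix.smul_mulVec, dotProduct_smul, smul_eq_mul]
    exact mul_nonneg (Complex.zero_le_real.mpr ht) (hA.dotProduct_mulVec_nonneg x)

lemma posSemidef_sum {k : ℕ} {ι : Type*} (s : Finset ι) (F : ι → Matrix (Fin k) (Fin k) ℂ)
    (hF : ∀ i ∈ s, (F i).PosSemidef) : (∑ i ∈ s, F i).PosSemidef := by
  classical
  induction s using Finset.induction_on with
  | empty => simpa using Matrix.PosSemidef.zero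
  | insert _ _ hni ih =>
    rw [Finset.sum_insert hni]
    exact (hF _ (Finset.mem_insert_self _ _)).add
      (ih fun i hi => hF i (Finset.mem_insert_of_mem hi))

lemma cq_density {X : Type*} [Fintype X] {k : ℕ} (ρ : X → Matrix (Fin k) (Fin k) ℂ)
    (hρ : ∀ x, IsDensityMatrix (ρ x)) {p : X → ℝ} (hp : ProbVec p) :
    IsDensityMatrix (cqApply ρ p) := by
  constructor
  · exact posSemidef_sum _ _ fun x _ => posSemidef_real_smul (hp.1 x) (hρ x).1
  · unfold cqApply
    rw [Matrix.trace_sum]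
    have : ∀ x : X, ((p x : ℂ) • ρ x).trace = (p x : ℂ) := by
      intro x
      rw [Matrix.trace_smul, (hρ x).2, smul_eq_mul, mul_one]
    rw [Finset.sum_congr rfl fun x _ => this x]
    rw [← Complex.ofReal_sum, hp.2, Complex.ofReal_one]

lemma density_inv_smul_one {k : ℕ} (hk : k ≠ 0) :
    IsDensityMatrix ((k : ℂ)⁻¹ • (1 : Matrix (Fin k) (Fin k) ℂ)) := by
  constructor
  · have hcoe : ((k : ℂ))⁻¹ = (((k : ℝ)⁻¹ : ℝ) : ℂ) := by push_cast; ring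
    rw [hcoe]
    exact posSemidef_real_smul (inv_nonneg.mpr (Nat.cast_nonneg k)) Matrix.PosSemidef.one
  · rw [Matrix.trace_smul, Matrix.trace_one, smul_eq_mul]
    rw [Fintype.card_fin]
    exact inv_mul_cancel₀ (Nat.cast_ne_zero.mpr hk)

/-- The replacement channel: a CPTP map exists whenever `k ≠ 0`. -/
lemma exists_cptp (n : ℕ) {k : ℕ} (hk : k ≠ 0) :
    ∃ Λ : Matrix (Fin n) (Fin n) ℂ →ₗ[ℂ] Matrix (Fin k) (Fin k) ℂ, IsCPTP Λ := by
  refine ⟨{ toFun := fun A => A.trace • ((k : ℂ)⁻¹ • 1)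
            map_add' := fun A B => by
              show (A + B).trace • _ = A.trace • _ + B.trace • _
              rw [Matrix.trace_add, add_smul]
            map_smul' := fun c A => by
              show (c • A).trace • _ = c • (A.trace • _)
              rw [Matrix.trace_smul, smul_assoc] }, ?_, ?_⟩
  · intro A
    show (A.trace • ((k : ℂ)⁻¹ • (1 : Matrix (Fin k) (Fin k) ℂ))).trace = A.trace
    rw [Matrix.trace_smul, (density_inv_smul_one hk).2, smul_eq_mul, mul_one]
  · show (∑ i : Fin n, ∑ j : Fin n,
      (((Matrix.single i j (1:ℂ)).trace) • ((k:ℂ)⁻¹ • (1 : Matrix (Fin k) (Fin k) ℂ)))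
        ⊗ₖ (Matrix.single i j (1 : ℂ))).PosSemidef
    have heq : (∑ i : Fin n, ∑ j : Fin n,
        (((Matrix.single i j (1:ℂ)).trace) • ((k:ℂ)⁻¹ • (1 : Matrix (Fin k) (Fin k) ℂ)))
          ⊗ₖ (Matrix.single i j (1 : ℂ)))
        = Matrix.diagonal (fun _ : Fin k × Fin n => (k:ℂ)⁻¹) := by
      ext ⟨a, a'⟩ ⟨b, b'⟩
      simp [Matrix.sum_apply, Matrix.kroneckerMap_apply, Matrix.single, Matrix.trace,
        Matrix.diag_apply, Matrix.one_apply, Matrix.diagonal_apply, ite_and, Matrix.smul_apply,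
        Finset.sum_ite_eq, Finset.sum_ite_eq', Prod.ext_iff]
      split_ifs <;> simp_all [eq_comm]
    rw [heq]
    refine Matrix.PosSemidef.diagonal ?_
    intro i
    show (0:ℂ) ≤ (k:ℂ)⁻¹
    rw [show ((k:ℂ))⁻¹ = (((k:ℝ)⁻¹ : ℝ) : ℂ) by push_cast; ring]
    exact Complex.zero_le_real.mpr (inv_nonneg.mpr (Nat.cast_nonneg k))

/-- The identity channel is CPTP. -/
lemma id_cptp {n : ℕ} :
    IsCPTP (LinearMap.id : Matrix (Fin n) (Fin n) ℂ →ₗ[ℂ] Matrix (Fin n) (Fin n) ℂ) := by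
  constructor
  · intro A; rfl
  · have hB : (∑ i : Fin n, ∑ j : Fin n,
        ((LinearMap.id : Matrix (Fin n) (Fin n) ℂ →ₗ[ℂ] Matrix (Fin n) (Fin n) ℂ)
            (Matrix.single i j (1:ℂ))) ⊗ₖ (Matrix.single i j (1 : ℂ)))
        = (Matrix.of fun (_ : Fin 1) (p : Fin n × Fin n) => if p.1 = p.2 then (1:ℂ) else 0)ᴴ
          * (Matrix.of fun (_ : Fin 1) (p : Fin n × Fin n) => if p.1 = p.2 then (1:ℂ) else 0) := by
      ext ⟨a, a'⟩ ⟨b, b'⟩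
      simp [Matrix.mul_apply, Matrix.sum_apply, Matrix.kroneckerMap_apply, Matrix.single,
        Matrix.of_apply, ite_and]
      split_ifs <;> simp_all [eq_comm]
    rw [hB]
    exact Matrix.posSemidef_conjTranspose_mul_self _

instance matLCS {n : ℕ} : LocallyConvexSpace ℝ (Matrix (Fin n) (Fin n) ℂ) :=
  (inferInstance : LocallyConvexSpace ℝ (Fin n → Fin n → ℂ))

lemma cqApply_combo {X : Type*} [Fintype X] {k : ℕ} (c d : ℂ)
    (ρa ρb : X → Matrix (Fin k) (Fin k) ℂ) (p : X → ℝ) :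
    cqApply (fun x => c • ρa x + d • ρb x) p = c • cqApply ρa p + d • cqApply ρb p := by
  unfold cqApply
  rw [Finset.smul_sum, Finset.smul_sum, ← Finset.sum_add_distrib]
  refine Finset.sum_congr rfl fun x _ => ?_
  rw [smul_add, smul_smul, smul_smul, smul_smul, smul_smul, mul_comm c, mul_comm d]

end AuxLemmas

/-- (Quantum randomization criterion.) A classical-to-quantum
channel `Γ` with `Γ(p0) = σ0`, `Γ(p1) = σ1` exists iff for every pair of
Hermitian matrices `(W0, W1)` the classical optimal gain dominates the quantum
optimal gain over CPTP post-processings. -/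
theorem cq_channel_exists_iff_randomization {X : Type*} [Fintype X] {n : ℕ}
    (p0 p1 : X → ℝ) (hp0 : ProbVec p0) (hp1 : ProbVec p1)
    (σ0 σ1 : Matrix (Fin n) (Fin n) ℂ)
    (hσ0 : IsDensityMatrix σ0) (hσ1 : IsDensityMatrix σ1) :
    (∃ ρ : X → Matrix (Fin n) (Fin n) ℂ, (∀ x, IsDensityMatrix (ρ x)) ∧
        cqApply ρ p0 = σ0 ∧ cqApply ρ p1 = σ1) ↔
      ∀ (k : ℕ) (W0 W1 : Matrix (Fin k) (Fin k) ℂ),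
        W0.IsHermitian → W1.IsHermitian →
        sSup {v : ℝ | ∃ Λ : Matrix (Fin n) (Fin n) ℂ →ₗ[ℂ] Matrix (Fin k) (Fin k) ℂ,
            IsCPTP Λ ∧ v = (W0 * Λ σ0).trace.re + (W1 * Λ σ1).trace.re} ≤
          sSup {v : ℝ | ∃ ρ : X → Matrix (Fin k) (Fin k) ℂ,
            (∀ x, IsDensityMatrix (ρ x)) ∧
            v = (∑ x, p0 x * (W0 * ρ x).trace.re) +
              (∑ x, p1 x * (W1 * ρ x).trace.re)} := by
  have hn : n ≠ 0 := by
    intro hzero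
    subst hzero
    have h1 := hσ0.2
    rw [Matrix.trace] at h1
    simp at h1
  have hXne : Nonempty X := by
    by_contra hX
    rw [not_nonempty_iff] at hX
    have h1 := hp0.2
    rw [Finset.univ_eq_empty, Finset.sum_empty] at h1
    norm_num at h1
  constructor
  · rintro ⟨ρ, hρd, hρ0, hρ1⟩ k W0 W1 hW0 hW1
    by_cases hk : k = 0
    · subst hk
      have hq : {v : ℝ | ∃ Λ : Matrix (Fin n) (Fin n) ℂ →ₗ[ℂ] Matrix (Fin 0) (Fin 0) ℂ,
          IsCPTP Λ ∧ v = (W0 * Λ σ0).trace.re + (W1 * Λ σ1).trace.re} = ∅ := by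
        ext v
        simp only [Set.mem_setOf_eq, Set.mem_empty_iff_false, iff_false, not_exists]
        rintro Λ ⟨hΛ, -⟩
        have h1 := hΛ.1 σ0
        rw [hσ0.2, Matrix.trace] at h1
        simp at h1
      have hc : {v : ℝ | ∃ ρ' : X → Matrix (Fin 0) (Fin 0) ℂ,
          (∀ x, IsDensityMatrix (ρ' x)) ∧
          v = (∑ x, p0 x * (W0 * ρ' x).trace.re) + (∑ x, p1 x * (W1 * ρ' x).trace.re)} = ∅ := by
        ext v
        simp only [Set.mem_setOf_eq, Set.mem_empty_iff_false, iff_false, not_exists]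
        rintro ρ' ⟨hρ', -⟩
        obtain ⟨x⟩ := hXne
        have h1 := (hρ' x).2
        rw [Matrix.trace] at h1
        simp at h1
      rw [hq, hc]
    · -- k ≠ 0
      have hbdd : BddAbove {v : ℝ | ∃ ρ' : X → Matrix (Fin k) (Fin k) ℂ,
          (∀ x, IsDensityMatrix (ρ' x)) ∧
          v = (∑ x, p0 x * (W0 * ρ' x).trace.re) + (∑ x, p1 x * (W1 * ρ' x).trace.re)} := by
        refine ⟨(∑ a, ∑ b, ‖W0 a b‖) + (∑ a, ∑ b, ‖W1 a b‖), ?_⟩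
        rintro v ⟨ρ', hρ', rfl⟩
        have h0 : ∑ x, p0 x * (W0 * ρ' x).trace.re ≤ ∑ a, ∑ b, ‖W0 a b‖ := by
          calc ∑ x, p0 x * (W0 * ρ' x).trace.re ≤ ∑ x, p0 x * (∑ a, ∑ b, ‖W0 a b‖) :=
              Finset.sum_le_sum fun x _ =>
                mul_le_mul_of_nonneg_left (trace_re_bound _ _ (hρ' x)) (hp0.1 x)
            _ = ∑ a, ∑ b, ‖W0 a b‖ := by rw [← Finset.sum_mul, hp0.2, one_mul]
        have h1 : ∑ x, p1 x * (W1 * ρ' x).trace.re ≤ ∑ a, ∑ b, ‖W1 a b‖ := by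
          calc ∑ x, p1 x * (W1 * ρ' x).trace.re ≤ ∑ x, p1 x * (∑ a, ∑ b, ‖W1 a b‖) :=
              Finset.sum_le_sum fun x _ =>
                mul_le_mul_of_nonneg_left (trace_re_bound _ _ (hρ' x)) (hp1.1 x)
            _ = ∑ a, ∑ b, ‖W1 a b‖ := by rw [← Finset.sum_mul, hp1.2, one_mul]
        exact add_le_add h0 h1
      have hqne : {v : ℝ | ∃ Λ : Matrix (Fin n) (Fin n) ℂ →ₗ[ℂ] Matrix (Fin k) (Fin k) ℂ,
          IsCPTP Λ ∧ v = (W0 * Λ σ0).trace.re + (W1 * Λ σ1).trace.re}.Nonempty := by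
        obtain ⟨Λ, hΛ⟩ := exists_cptp n hk
        exact ⟨_, Λ, hΛ, rfl⟩
      refine csSup_le hqne ?_
      rintro v ⟨Λ, hΛ, rfl⟩
      refine le_csSup hbdd ?_
      refine ⟨fun x => Λ (ρ x), fun x => cptp_density Λ hΛ (hρd x), ?_⟩
      rw [← hρ0, ← hρ1, cq_map, cq_map, trace_cq, trace_cq]
  · intro h
    by_contra hno
    -- the compact convex set of achievable pairs
    set D : Set (X → Matrix (Fin n) (Fin n) ℂ) :=
      {ρfam | ∀ x, IsDensityMatrix (ρfam x)} with hD
    set g : (X → Matrix (Fin n) (Fin n) ℂ) →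
        Matrix (Fin n) (Fin n) ℂ × Matrix (Fin n) (Fin n) ℂ :=
      fun ρfam => (cqApply ρfam p0, cqApply ρfam p1) with hg
    have hgc : Continuous g := by
      have hcq : ∀ p : X → ℝ, Continuous fun ρfam : X → Matrix (Fin n) (Fin n) ℂ =>
          cqApply ρfam p := by
        intro p
        unfold cqApply
        exact continuous_finset_sum _ fun x _ => by fun_prop
      exact (hcq p0).prodMk (hcq p1)
    have hDc : IsCompact D := by
      have hDeq : D = Set.pi Set.univ
          (fun _ : X => {ρ : Matrix (Fin n) (Fin n) ℂ | IsDensityMatrix ρ}) := by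
        ext ρfam
        simp [hD, Set.mem_pi]
      rw [hDeq]
      exact isCompact_univ_pi fun _ => isCompact_density
    have hCc : IsCompact (g '' D) := hDc.image hgc
    have hCconv : Convex ℝ (g '' D) := by
      rintro a ⟨ρa, hρa, rfl⟩ b ⟨ρb, hρb, rfl⟩ t s ht hs hts
      refine ⟨fun x => (t : ℂ) • ρa x + (s : ℂ) • ρb x, fun x => ?_, ?_⟩
      · constructor
        · exact (posSemidef_real_smul ht (hρa x).1).add (posSemidef_real_smul hs (hρb x).1)
        · rw [Matrix.trace_add, Matrix.trace_smul, Matrix.trace_smul, (hρa x).2, (hρb x).2,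
            smul_eq_mul, smul_eq_mul, mul_one, mul_one]
          exact_mod_cast congrArg (fun r : ℝ => (r : ℂ)) hts
      · show g _ = t • g ρa + s • g ρb
        rw [hg]
        simp only [Prod.smul_mk, Prod.mk_add_mk]
        rw [cqApply_combo, cqApply_combo]
        rw [Complex.coe_smul, Complex.coe_smul, Complex.coe_smul, Complex.coe_smul]
    have hnotin : (σ0, σ1) ∉ g '' D := by
      rintro ⟨ρfam, hfam, heq⟩
      exact hno ⟨ρfam, hfam, congrArg Prod.fst heq, congrArg Prod.snd heq⟩
    obtain ⟨f, u, hfu, hufx⟩ := geometric_hahn_banach_closed_point hCconv hCc.isClosed hnotin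
    -- extract Hermitian witnesses
    set f0 : Matrix (Fin n) (Fin n) ℂ →ₗ[ℝ] ℝ :=
      (f : (Matrix (Fin n) (Fin n) ℂ × Matrix (Fin n) (Fin n) ℂ) →ₗ[ℝ] ℝ).comp
        (LinearMap.inl ℝ _ _) with hf0
    set f1 : Matrix (Fin n) (Fin n) ℂ →ₗ[ℝ] ℝ :=
      (f : (Matrix (Fin n) (Fin n) ℂ × Matrix (Fin n) (Fin n) ℂ) →ₗ[ℝ] ℝ).comp
        (LinearMap.inr ℝ _ _) with hf1
    have hsplit : ∀ A B : Matrix (Fin n) (Fin n) ℂ, f (A, B) = f0 A + f1 B := by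
      intro A B
      have : (A, B) = (A, (0 : Matrix (Fin n) (Fin n) ℂ))
          + ((0 : Matrix (Fin n) (Fin n) ℂ), B) := by
        rw [Prod.mk_add_mk, add_zero, zero_add]
      rw [this, map_add]
      rfl
    obtain ⟨W0', hW0'⟩ := exists_repr_matrix f0
    obtain ⟨W1', hW1'⟩ := exists_repr_matrix f1
    set W0 : Matrix (Fin n) (Fin n) ℂ := (((2:ℝ)⁻¹ : ℝ) : ℂ) • (W0' + W0'ᴴ) with hW0def
    set W1 : Matrix (Fin n) (Fin n) ℂ := (((2:ℝ)⁻¹ : ℝ) : ℂ) • (W1' + W1'ᴴ) with hW1def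
    have hherm : ∀ V : Matrix (Fin n) (Fin n) ℂ,
        ((((2:ℝ)⁻¹ : ℝ) : ℂ) • (V + Vᴴ)).IsHermitian := by
      intro V
      show ((((2:ℝ)⁻¹ : ℝ) : ℂ) • (V + Vᴴ))ᴴ = _
      rw [Matrix.conjTranspose_smul, Complex.star_def, Complex.conj_ofReal,
        Matrix.conjTranspose_add, Matrix.conjTranspose_conjTranspose, add_comm Vᴴ V]
    have htr : ∀ (V A : Matrix (Fin n) (Fin n) ℂ), A.IsHermitian →
        (((((2:ℝ)⁻¹ : ℝ) : ℂ) • (V + Vᴴ)) * A).trace.re = (V * A).trace.re := by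
      intro V A hA
      have hconj : (Vᴴ * A).trace = star ((V * A).trace) := by
        calc (Vᴴ * A).trace = (Vᴴ * Aᴴ).trace := by rw [hA.eq]
          _ = ((A * V)ᴴ).trace := by rw [Matrix.conjTranspose_mul]
          _ = star ((A * V).trace) := Matrix.trace_conjTranspose _
          _ = star ((V * A).trace) := by rw [Matrix.trace_mul_comm]
      rw [Matrix.smul_mul, Matrix.trace_smul, Matrix.add_mul, Matrix.trace_add, hconj,
        smul_eq_mul]
      simp [Complex.mul_re, Complex.add_re, Complex.conj_re]
      ring
    have hW0herm : W0.IsHermitian := hherm W0'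
    have hW1herm : W1.IsHermitian := hherm W1'
    have hkey := h n W0 W1 hW0herm hW1herm
    -- classical side is below u
    have hcle : sSup {v : ℝ | ∃ ρ' : X → Matrix (Fin n) (Fin n) ℂ,
        (∀ x, IsDensityMatrix (ρ' x)) ∧
        v = (∑ x, p0 x * (W0 * ρ' x).trace.re) + (∑ x, p1 x * (W1 * ρ' x).trace.re)} ≤ u := by
      refine csSup_le ⟨_, fun _ => (n:ℂ)⁻¹ • 1, fun _ => density_inv_smul_one hn, rfl⟩ ?_
      rintro v ⟨ρ', hρ', rfl⟩
      have hd0 := cq_density ρ' hρ' hp0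
      have hd1 := cq_density ρ' hρ' hp1
      have hv : (∑ x, p0 x * (W0 * ρ' x).trace.re) + (∑ x, p1 x * (W1 * ρ' x).trace.re)
          = f (g ρ') := by
        rw [← trace_cq, ← trace_cq, hg]
        have e0 : (W0 * cqApply ρ' p0).trace.re = f0 (cqApply ρ' p0) := by
          rw [hW0def, htr W0' _ hd0.1.1, hW0']
        have e1 : (W1 * cqApply ρ' p1).trace.re = f1 (cqApply ρ' p1) := by
          rw [hW1def, htr W1' _ hd1.1.1, hW1']
        rw [e0, e1, hsplit]
      rw [hv]
      exact le_of_lt (hfu _ ⟨ρ', hρ', rfl⟩)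
    -- quantum side is above u
    have hqgt : u < sSup {v : ℝ | ∃ Λ : Matrix (Fin n) (Fin n) ℂ →ₗ[ℂ] Matrix (Fin n) (Fin n) ℂ,
        IsCPTP Λ ∧ v = (W0 * Λ σ0).trace.re + (W1 * Λ σ1).trace.re} := by
      have hqbdd : BddAbove {v : ℝ | ∃ Λ : Matrix (Fin n) (Fin n) ℂ →ₗ[ℂ]
          Matrix (Fin n) (Fin n) ℂ, IsCPTP Λ ∧ v = (W0 * Λ σ0).trace.re
            + (W1 * Λ σ1).trace.re} := by
        refine ⟨(∑ a, ∑ b, ‖W0 a b‖) + (∑ a, ∑ b, ‖W1 a b‖), ?_⟩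
        rintro v ⟨Λ, hΛ, rfl⟩
        exact add_le_add (trace_re_bound _ _ (cptp_density Λ hΛ hσ0))
          (trace_re_bound _ _ (cptp_density Λ hΛ hσ1))
      have hmem : (W0 * σ0).trace.re + (W1 * σ1).trace.re
          ∈ {v : ℝ | ∃ Λ : Matrix (Fin n) (Fin n) ℂ →ₗ[ℂ] Matrix (Fin n) (Fin n) ℂ,
              IsCPTP Λ ∧ v = (W0 * Λ σ0).trace.re + (W1 * Λ σ1).trace.re} :=
        ⟨LinearMap.id, id_cptp, rfl⟩
      have hval : (W0 * σ0).trace.re + (W1 * σ1).trace.re = f (σ0, σ1) := by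
        have e0 : (W0 * σ0).trace.re = f0 σ0 := by rw [hW0def, htr W0' _ hσ0.1.1, hW0']
        have e1 : (W1 * σ1).trace.re = f1 σ1 := by rw [hW1def, htr W1' _ hσ1.1.1, hW1']
        rw [e0, e1, hsplit]
      calc u < f (σ0, σ1) := hufx
        _ = (W0 * σ0).trace.re + (W1 * σ1).trace.re := hval.symm
        _ ≤ _ := le_csSup hqbdd hmem
    linarith
end

section
/- Let p0, p1 be probability vectors on a finite set X and q0, q1 probability vectors on a finite set Y. There exists a stochastic matrix P from X to Y with Pp0 = q0 and Pp1 = q1 if and only if D_f(p0‖p1) ≥ D_f(q0‖q1) holds for every convex continuous function f : [0,∞) → ℝ. -/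
open Matrix
open scoped Kronecker ComplexOrder

/-! ### Auxiliary lemmas -/

section Aux

open Filter

private lemma recessionSlope_eq_of_tendsto {f : ℝ → ℝ} {M : ℝ}
    (h : Tendsto (fun lam => f lam / lam) atTop (nhds M)) :
    recessionSlope f = (M : EReal) :=
  ((continuous_coe_real_ereal.tendsto M).comp h).limsup_eq

private lemma mul_sup'' {ι : Type*} {s : Finset ι} (hs : s.Nonempty) (F : ι → ℝ) {c : ℝ}
    (hc : 0 ≤ c) : c * s.sup' hs F = s.sup' hs fun i => c * F i := by
  have := Finset.comp_sup'_eq_sup'_comp (f := F) hs (fun x => c * x)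
    (fun x y => by exact mul_max_of_nonneg x y hc)
  simpa [Function.comp] using this

private lemma sup'_affine_tendsto {Y : Type*} [Fintype Y]
    (hne : (Finset.univ : Finset Y).Nonempty) (a b : Y → ℝ) :
    Tendsto (fun t : ℝ => (Finset.univ.sup' hne fun y => a y * t + b y) / t)
      atTop (nhds (Finset.univ.sup' hne a)) := by
  set M := Finset.univ.sup' hne a with hM
  set C := Finset.univ.sup' hne (fun y => |b y|) with hC
  have hCb : ∀ y : Y, |b y| ≤ C := fun y => by
    rw [hC]; exact Finset.le_sup' (fun y => |b y|) (Finset.mem_univ y)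
  have key : ∀ t : ℝ, 0 < t →
      M - C / t ≤ (Finset.univ.sup' hne fun y => a y * t + b y) / t ∧
      (Finset.univ.sup' hne fun y => a y * t + b y) / t ≤ M + C / t := by
    intro t ht
    constructor
    · obtain ⟨y₁, _, hy₁⟩ := Finset.exists_mem_eq_sup' hne a
      have h1 : a y₁ * t + b y₁ ≤ Finset.univ.sup' hne fun y => a y * t + b y :=
        Finset.le_sup' (fun y => a y * t + b y) (Finset.mem_univ y₁)
      have hb1 := (abs_le.1 (hCb y₁)).1
      rw [le_div_iff₀ ht]
      have heq : (M - C / t) * t = M * t - C := by field_simp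
      rw [heq, hM, hy₁]
      nlinarith
    · obtain ⟨y₀, _, hy₀⟩ := Finset.exists_mem_eq_sup' hne (fun y => a y * t + b y)
      have h1 : a y₀ ≤ M := by
        rw [hM]; exact Finset.le_sup' a (Finset.mem_univ y₀)
      have h2 := (abs_le.1 (hCb y₀)).2
      rw [div_le_iff₀ ht, hy₀]
      have heq : (M + C / t) * t = M * t + C := by field_simp
      rw [heq]
      nlinarith
  have hC0 : Tendsto (fun t : ℝ => C / t) atTop (nhds 0) :=
    tendsto_const_nhds.div_atTop tendsto_id
  have hlow : Tendsto (fun t : ℝ => M - C / t) atTop (nhds M) := by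
    simpa using tendsto_const_nhds.sub hC0
  have hhigh : Tendsto (fun t : ℝ => M + C / t) atTop (nhds M) := by
    simpa using tendsto_const_nhds.add hC0
  refine tendsto_of_tendsto_of_tendsto_of_le_of_le' hlow hhigh ?_ ?_
  · filter_upwards [eventually_gt_atTop 0] with t ht using (key t ht).1
  · filter_upwards [eventually_gt_atTop 0] with t ht using (key t ht).2

private lemma sup'_affine_convexOn {Y : Type*} [Fintype Y]
    (hne : (Finset.univ : Finset Y).Nonempty) (a b : Y → ℝ) :
    ConvexOn ℝ (Set.Ici 0) (fun t : ℝ => Finset.univ.sup' hne fun y => a y * t + b y) := by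
  refine ⟨convex_Ici 0, fun x _ y _ α β hα hβ hαβ => ?_⟩
  refine Finset.sup'_le _ _ fun i _ => ?_
  have h1 : a i * x + b i ≤ Finset.univ.sup' hne fun y => a y * x + b y :=
    Finset.le_sup' (fun y => a y * x + b y) (Finset.mem_univ i)
  have h2 : a i * y + b i ≤ Finset.univ.sup' hne fun y' => a y' * y + b y' :=
    Finset.le_sup' (fun y' => a y' * y + b y') (Finset.mem_univ i)
  have heq : a i * (α • x + β • y) + b i = α * (a i * x + b i) + β * (a i * y + b i) := by
    simp only [smul_eq_mul]
    linear_combination (-(b i)) * hαβ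
  rw [heq]
  simp only [smul_eq_mul]
  exact add_le_add (mul_le_mul_of_nonneg_left h1 hα) (mul_le_mul_of_nonneg_left h2 hβ)

private lemma sup'_continuous {ι : Type*} {s : Finset ι} (hs : s.Nonempty) (F : ι → ℝ → ℝ)
    (hF : ∀ i, Continuous (F i)) : Continuous fun t => s.sup' hs fun i => F i t :=
  Continuous.finset_sup'_apply hs fun i _ => hF i

private lemma slope_le_recessionSlope {f : ℝ → ℝ} (hf : ConvexOn ℝ (Set.Ici 0) f)
    {z t : ℝ} (hz : 0 ≤ z) (ht : 0 < t) :
    (((f (z + t) - f z) / t : ℝ) : EReal) ≤ recessionSlope f := by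
  set c : ℝ := (f (z + t) - f z) / t with hc
  have hsec : ∀ lam : ℝ, z + t ≤ lam → f z + (lam - z) * c ≤ f lam := by
    intro lam hlam
    rcases eq_or_lt_of_le hlam with h | h
    · rw [← h]
      have heq : (z + t - z) * c = f (z + t) - f z := by
        rw [hc]; field_simp; ring
      rw [heq]; ring_nf; exact le_refl _
    · have hmono := hf.secant_mono (a := z) (x := z + t) (y := lam)
        (Set.mem_Ici.2 hz) (Set.mem_Ici.2 (by linarith)) (Set.mem_Ici.2 (by linarith))
        (by linarith) (by linarith) (le_of_lt h)
      have h1 : z + t - z = t := by ring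
      rw [h1, ← hc] at hmono
      have h2 : 0 < lam - z := by linarith
      rw [le_div_iff₀ h2] at hmono
      linarith
  have hlow : Tendsto (fun lam : ℝ => c + (f z - z * c) / lam) atTop (nhds c) := by
    simpa using tendsto_const_nhds.add (tendsto_const_nhds.div_atTop (tendsto_id (α := ℝ)))
  have hlowE : Tendsto (fun lam : ℝ => ((c + (f z - z * c) / lam : ℝ) : EReal))
      atTop (nhds (c : EReal)) := (continuous_coe_real_ereal.tendsto c).comp hlow
  have hev : (fun lam : ℝ => ((c + (f z - z * c) / lam : ℝ) : EReal)) ≤ᶠ[atTop]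
      (fun lam : ℝ => ((f lam / lam : ℝ) : EReal)) := by
    filter_upwards [eventually_ge_atTop (max (z + t) 1)] with lam hlam
    have h1 : z + t ≤ lam := le_trans (le_max_left _ _) hlam
    have h2 : (0:ℝ) < lam := by
      have := le_trans (le_max_right _ _) hlam; linarith
    have h3 := hsec lam h1
    have hkey : c + (f z - z * c) / lam ≤ f lam / lam := by
      have heq : c + (f z - z * c) / lam = (f z + (lam - z) * c) / lam := by
        field_simp; ring
      rw [heq]
      gcongr
    exact EReal.coe_le_coe_iff.2 hkey
  calc (c : EReal) = limsup (fun lam : ℝ => ((c + (f z - z * c) / lam : ℝ) : EReal)) atTop :=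
        (hlowE.limsup_eq).symm
    _ ≤ recessionSlope f := limsup_le_limsup hev

private lemma jensen_sum {ι : Type*} {t : Finset ι} {f : ℝ → ℝ}
    (hf : ConvexOn ℝ (Set.Ici 0) f) {w z : ι → ℝ}
    (hw : ∀ i ∈ t, 0 ≤ w i) (hz : ∀ i ∈ t, 0 ≤ z i) (hW : 0 < ∑ i ∈ t, w i) :
    (∑ i ∈ t, w i) * f ((∑ i ∈ t, w i * z i) / (∑ i ∈ t, w i)) ≤ ∑ i ∈ t, w i * f (z i) := by
  have h := hf.map_centerMass_le hw hW (fun i hi => Set.mem_Ici.2 (hz i hi))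
  rw [Finset.centerMass, Finset.centerMass] at h
  simp only [smul_eq_mul, Function.comp] at h
  have hW' : (∑ i ∈ t, w i) ≠ 0 := ne_of_gt hW
  rw [inv_mul_eq_div] at h
  have h2 := mul_le_mul_of_nonneg_left h (le_of_lt hW)
  rwa [← mul_assoc, mul_inv_cancel₀ hW', one_mul] at h2

private lemma fDiv_eq_sum {X : Type*} [Fintype X] {f : ℝ → ℝ} {M : ℝ}
    (hM : recessionSlope f = (M : EReal)) (p0 p1 : X → ℝ) :
    fDiv f p0 p1
      = ((∑ x, if 0 < p1 x then p1 x * f (p0 x / p1 x) else p0 x * M : ℝ) : EReal) := by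
  rw [fDiv, hM, ← EReal.coe_mul, ← EReal.coe_add]
  refine congrArg _ ?_
  rw [Finset.sum_mul, ← Finset.sum_add_distrib]
  refine Finset.sum_congr rfl fun x _ => ?_
  by_cases h : 0 < p1 x <;> simp [h]

end Aux

section DPI

private lemma column_sum_eq {X Y : Type*} [Fintype X] [Fintype Y] {P : Y → X → ℝ}
    (hP : IsStochastic P) (F : X → ℝ) :
    ∑ y, ∑ x, P y x * F x = ∑ x, F x := by
  rw [Finset.sum_comm]
  refine Finset.sum_congr rfl fun x _ => ?_
  rw [← Finset.sum_mul, hP.2 x, one_mul]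

private lemma q1_zero_forall {X Y : Type*} [Fintype X] [Fintype Y] {P : Y → X → ℝ}
    (hP : IsStochastic P) {p1 : X → ℝ} (hp1 : ∀ x, 0 ≤ p1 x) {y : Y}
    (hy : ¬ 0 < stocApply P p1 y) : ∀ x, P y x * p1 x = 0 := by
  have h0 : stocApply P p1 y = 0 :=
    le_antisymm (not_lt.1 hy)
      (Finset.sum_nonneg fun x _ => mul_nonneg (hP.1 y x) (hp1 x))
  intro x
  exact (Finset.sum_eq_zero_iff_of_nonneg
    (fun x _ => mul_nonneg (hP.1 y x) (hp1 x))).1 h0 x (Finset.mem_univ x)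

private lemma dpi_real {X Y : Type*} [Fintype X] [Fintype Y] {P : Y → X → ℝ}
    (hP : IsStochastic P) {p0 p1 : X → ℝ} (hp0 : ∀ x, 0 ≤ p0 x) (hp1 : ∀ x, 0 ≤ p1 x)
    {f : ℝ → ℝ} (hf : ConvexOn ℝ (Set.Ici 0) f) (l : ℝ)
    (hl : ∀ z t : ℝ, 0 ≤ z → 0 ≤ t → f (z + t) ≤ f z + t * l) :
    ∑ y, (if 0 < stocApply P p1 y then
        stocApply P p1 y * f (stocApply P p0 y / stocApply P p1 y)
      else stocApply P p0 y * l)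
      ≤ ∑ x, (if 0 < p1 x then p1 x * f (p0 x / p1 x) else p0 x * l) := by
  classical
  set F : X → ℝ := fun x => if 0 < p1 x then p1 x * f (p0 x / p1 x) else p0 x * l with hF
  have hFpos : ∀ x, 0 < p1 x → F x = p1 x * f (p0 x / p1 x) := by
    intro x hx; rw [hF]; simp [hx]
  have hFneg : ∀ x, ¬ 0 < p1 x → F x = p0 x * l := by
    intro x hx; rw [hF]; simp [hx]
  have key : ∀ y, (if 0 < stocApply P p1 y then
        stocApply P p1 y * f (stocApply P p0 y / stocApply P p1 y)
      else stocApply P p0 y * l) ≤ ∑ x, P y x * F x := by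
    intro y
    by_cases hy : 0 < stocApply P p1 y
    · simp only [hy, if_true]
      set s := Finset.univ.filter (fun x : X => 0 < p1 x) with hs
      have hp1zero : ∀ x ∈ Finset.univ.filter (fun x : X => ¬ 0 < p1 x), p1 x = 0 :=
        fun x hx => le_antisymm (not_lt.1 (Finset.mem_filter.1 hx).2) (hp1 x)
      have hq1 : stocApply P p1 y = ∑ x ∈ s, P y x * p1 x := by
        rw [stocApply,
          ← Finset.sum_filter_add_sum_filter_not Finset.univ (fun x : X => 0 < p1 x)
            (fun x => P y x * p1 x),
          show (∑ x ∈ Finset.univ.filter (fun x : X => ¬ 0 < p1 x), P y x * p1 x) = 0 from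
            Finset.sum_eq_zero (fun x hx => by rw [hp1zero x hx, mul_zero]), add_zero]
      have hq0 : stocApply P p0 y = (∑ x ∈ s, P y x * p0 x)
          + ∑ x ∈ Finset.univ.filter (fun x : X => ¬ 0 < p1 x), P y x * p0 x := by
        rw [stocApply,
          ← Finset.sum_filter_add_sum_filter_not Finset.univ (fun x : X => 0 < p1 x)
            (fun x => P y x * p0 x)]
      set S1 := ∑ x ∈ s, P y x * p1 x with hS1def
      set S0 := ∑ x ∈ s, P y x * p0 x with hS0def
      set T := ∑ x ∈ Finset.univ.filter (fun x : X => ¬ 0 < p1 x), P y x * p0 x with hTdef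
      have hS1 : 0 < S1 := hq1 ▸ hy
      have hS0 : 0 ≤ S0 := Finset.sum_nonneg fun x _ => mul_nonneg (hP.1 y x) (hp0 x)
      have hT : 0 ≤ T := Finset.sum_nonneg fun x _ => mul_nonneg (hP.1 y x) (hp0 x)
      have hjen : S1 * f (S0 / S1) ≤ ∑ x ∈ s, (P y x * p1 x) * f (p0 x / p1 x) := by
        have hsum : ∑ x ∈ s, (P y x * p1 x) * (p0 x / p1 x) = S0 := by
          refine Finset.sum_congr rfl fun x hx => ?_
          have hx1 : p1 x ≠ 0 := ne_of_gt (Finset.mem_filter.1 hx).2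
          field_simp
        have hj := jensen_sum hf (w := fun x => P y x * p1 x) (z := fun x => p0 x / p1 x)
          (t := s) (fun x _ => mul_nonneg (hP.1 y x) (hp1 x))
          (fun x _ => div_nonneg (hp0 x) (hp1 x)) (by rw [← hS1def]; exact hS1)
        rw [hsum] at hj
        rw [← hS1def] at hj
        exact hj
      have hstart : stocApply P p1 y * f (stocApply P p0 y / stocApply P p1 y)
          = S1 * f (S0 / S1 + T / S1) := by
        rw [hq0, hq1, add_div]
      calc stocApply P p1 y * f (stocApply P p0 y / stocApply P p1 y)
          = S1 * f (S0 / S1 + T / S1) := hstart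
        _ ≤ S1 * (f (S0 / S1) + (T / S1) * l) :=
            mul_le_mul_of_nonneg_left
              (hl _ _ (div_nonneg hS0 (le_of_lt hS1)) (div_nonneg hT (le_of_lt hS1)))
              (le_of_lt hS1)
        _ = S1 * f (S0 / S1) + T * l := by
            have h5 : S1 * ((T / S1) * l) = T * l := by
              field_simp
            rw [mul_add, h5]
        _ ≤ (∑ x ∈ s, (P y x * p1 x) * f (p0 x / p1 x)) + T * l := by linarith
        _ = ∑ x, P y x * F x := by
            rw [← Finset.sum_filter_add_sum_filter_not Finset.univ (fun x : X => 0 < p1 x)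
              (fun x => P y x * F x)]
            congr 1
            · refine Finset.sum_congr rfl fun x hx => ?_
              rw [hFpos x (Finset.mem_filter.1 hx).2]; ring
            · rw [hTdef, Finset.sum_mul]
              refine Finset.sum_congr rfl fun x hx => ?_
              rw [hFneg x (Finset.mem_filter.1 hx).2]; ring
    · simp only [hy, if_false]
      have hq1 := q1_zero_forall hP hp1 hy
      refine le_of_eq ?_
      rw [stocApply, Finset.sum_mul]
      refine Finset.sum_congr rfl fun x _ => ?_
      by_cases hx : 0 < p1 x
      · have hPx : P y x = 0 := by
          rcases mul_eq_zero.1 (hq1 x) with h | h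
          · exact h
          · exact absurd h (ne_of_gt hx)
        rw [hPx]; ring
      · rw [hFneg x hx]; ring
  calc ∑ y, (if 0 < stocApply P p1 y then
        stocApply P p1 y * f (stocApply P p0 y / stocApply P p1 y)
      else stocApply P p0 y * l)
      ≤ ∑ y, ∑ x, P y x * F x := Finset.sum_le_sum fun y _ => key y
    _ = ∑ x, F x := column_sum_eq hP F

private lemma dpi_real_top {X Y : Type*} [Fintype X] [Fintype Y] {P : Y → X → ℝ}
    (hP : IsStochastic P) {p0 p1 : X → ℝ} (hp0 : ∀ x, 0 ≤ p0 x) (hp1 : ∀ x, 0 ≤ p1 x)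
    {f : ℝ → ℝ} (hf : ConvexOn ℝ (Set.Ici 0) f)
    (hvan : ∀ x, ¬ 0 < p1 x → p0 x = 0) :
    ∑ y, (if 0 < stocApply P p1 y then
        stocApply P p1 y * f (stocApply P p0 y / stocApply P p1 y) else 0)
      ≤ ∑ x, (if 0 < p1 x then p1 x * f (p0 x / p1 x) else 0) := by
  classical
  set F : X → ℝ := fun x => if 0 < p1 x then p1 x * f (p0 x / p1 x) else 0 with hF
  have hFpos : ∀ x, 0 < p1 x → F x = p1 x * f (p0 x / p1 x) := by
    intro x hx; rw [hF]; simp [hx]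
  have hFneg : ∀ x, ¬ 0 < p1 x → F x = 0 := by
    intro x hx; rw [hF]; simp [hx]
  have key : ∀ y, (if 0 < stocApply P p1 y then
        stocApply P p1 y * f (stocApply P p0 y / stocApply P p1 y) else 0)
      ≤ ∑ x, P y x * F x := by
    intro y
    by_cases hy : 0 < stocApply P p1 y
    · simp only [hy, if_true]
      set s := Finset.univ.filter (fun x : X => 0 < p1 x) with hs
      have hp1zero : ∀ x ∈ Finset.univ.filter (fun x : X => ¬ 0 < p1 x), p1 x = 0 :=
        fun x hx => le_antisymm (not_lt.1 (Finset.mem_filter.1 hx).2) (hp1 x)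
      have hq1 : stocApply P p1 y = ∑ x ∈ s, P y x * p1 x := by
        rw [stocApply,
          ← Finset.sum_filter_add_sum_filter_not Finset.univ (fun x : X => 0 < p1 x)
            (fun x => P y x * p1 x),
          show (∑ x ∈ Finset.univ.filter (fun x : X => ¬ 0 < p1 x), P y x * p1 x) = 0 from
            Finset.sum_eq_zero (fun x hx => by rw [hp1zero x hx, mul_zero]), add_zero]
      have hq0 : stocApply P p0 y = ∑ x ∈ s, P y x * p0 x := by
        rw [stocApply,
          ← Finset.sum_filter_add_sum_filter_not Finset.univ (fun x : X => 0 < p1 x)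
            (fun x => P y x * p0 x),
          show (∑ x ∈ Finset.univ.filter (fun x : X => ¬ 0 < p1 x), P y x * p0 x) = 0 from
            Finset.sum_eq_zero (fun x hx => by
              rw [hvan x (Finset.mem_filter.1 hx).2, mul_zero]), add_zero]
      set S1 := ∑ x ∈ s, P y x * p1 x with hS1def
      set S0 := ∑ x ∈ s, P y x * p0 x with hS0def
      have hS1 : 0 < S1 := hq1 ▸ hy
      have hjen : S1 * f (S0 / S1) ≤ ∑ x ∈ s, (P y x * p1 x) * f (p0 x / p1 x) := by
        have hsum : ∑ x ∈ s, (P y x * p1 x) * (p0 x / p1 x) = S0 := by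
          refine Finset.sum_congr rfl fun x hx => ?_
          have hx1 : p1 x ≠ 0 := ne_of_gt (Finset.mem_filter.1 hx).2
          field_simp
        have hj := jensen_sum hf (w := fun x => P y x * p1 x) (z := fun x => p0 x / p1 x)
          (t := s) (fun x _ => mul_nonneg (hP.1 y x) (hp1 x))
          (fun x _ => div_nonneg (hp0 x) (hp1 x)) (by rw [← hS1def]; exact hS1)
        rw [hsum] at hj
        rw [← hS1def] at hj
        exact hj
      calc stocApply P p1 y * f (stocApply P p0 y / stocApply P p1 y)
          = S1 * f (S0 / S1) := by rw [hq1, hq0]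
        _ ≤ ∑ x ∈ s, (P y x * p1 x) * f (p0 x / p1 x) := hjen
        _ = ∑ x, P y x * F x := by
            rw [← Finset.sum_filter_add_sum_filter_not Finset.univ (fun x : X => 0 < p1 x)
              (fun x => P y x * F x),
              show (∑ x ∈ Finset.univ.filter (fun x : X => ¬ 0 < p1 x), P y x * F x) = 0 from
                Finset.sum_eq_zero (fun x hx => by
                  rw [hFneg x (Finset.mem_filter.1 hx).2, mul_zero]), add_zero]
            refine Finset.sum_congr rfl fun x hx => ?_
            rw [hFpos x (Finset.mem_filter.1 hx).2]; ring
    · simp only [hy, if_false]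
      have hq1 := q1_zero_forall hP hp1 hy
      refine le_of_eq ?_
      refine (Finset.sum_eq_zero fun x _ => ?_).symm
      by_cases hx : 0 < p1 x
      · have hPx : P y x = 0 := by
          rcases mul_eq_zero.1 (hq1 x) with h | h
          · exact h
          · exact absurd h (ne_of_gt hx)
        rw [hPx, zero_mul]
      · rw [hFneg x hx, mul_zero]
  calc ∑ y, (if 0 < stocApply P p1 y then
        stocApply P p1 y * f (stocApply P p0 y / stocApply P p1 y) else 0)
      ≤ ∑ y, ∑ x, P y x * F x := Finset.sum_le_sum fun y _ => key y
    _ = ∑ x, F x := column_sum_eq hP F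

end DPI

private lemma fDiv_sup'_affine {X Y : Type*} [Fintype X] [Fintype Y]
    (hne : (Finset.univ : Finset Y).Nonempty) (a b : Y → ℝ)
    {p0 p1 : X → ℝ} (hp0 : ∀ x, 0 ≤ p0 x) (hp1 : ∀ x, 0 ≤ p1 x) :
    fDiv (fun t => Finset.univ.sup' hne fun y => a y * t + b y) p0 p1
      = ((∑ x, Finset.univ.sup' hne fun y => a y * p0 x + b y * p1 x : ℝ) : EReal) := by
  have hrs : recessionSlope (fun t => Finset.univ.sup' hne fun y => a y * t + b y)
      = ((Finset.univ.sup' hne a : ℝ) : EReal) :=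
    recessionSlope_eq_of_tendsto (sup'_affine_tendsto hne a b)
  rw [fDiv_eq_sum hrs]
  refine congrArg _ (Finset.sum_congr rfl fun x _ => ?_)
  by_cases h : 0 < p1 x
  · simp only [h, if_true]
    rw [mul_sup'' hne _ (le_of_lt h)]
    have heq : (fun y => p1 x * (a y * (p0 x / p1 x) + b y))
        = fun y => a y * p0 x + b y * p1 x := by
      funext y
      field_simp
    rw [heq]
  · have h1 : p1 x = 0 := le_antisymm (not_lt.1 h) (hp1 x)
    simp only [h, if_false]
    rw [mul_sup'' hne a (hp0 x)]
    have heq : (fun y => p0 x * a y) = fun y => a y * p0 x + b y * p1 x := by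
      funext y
      rw [h1]
      ring
    rw [heq]

/-- (Classical comparison of dichotomies.) A stochastic matrix
`P` with `P p0 = q0`, `P p1 = q1` exists iff `D_f(p0‖p1) ≥ D_f(q0‖q1)` for every
convex continuous `f : [0,∞) → ℝ`. -/
theorem stochastic_exists_iff_fDiv_le {X Y : Type*} [Fintype X] [Fintype Y]
    (p0 p1 : X → ℝ) (hp0 : ProbVec p0) (hp1 : ProbVec p1)
    (q0 q1 : Y → ℝ) (hq0 : ProbVec q0) (hq1 : ProbVec q1) :
    (∃ P : Y → X → ℝ, IsStochastic P ∧ stocApply P p0 = q0 ∧ stocApply P p1 = q1) ↔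
      ∀ f : ℝ → ℝ, ConvexOn ℝ (Set.Ici 0) f → ContinuousOn f (Set.Ici 0) →
        fDiv f q0 q1 ≤ fDiv f p0 p1 := by
  classical
  constructor
  · -- data processing inequality
    rintro ⟨P, hP, h0, h1⟩ f hconv _
    subst h0
    subst h1
    by_cases htop : recessionSlope f = ⊤
    · by_cases hB : ∑ x, (if 0 < p1 x then (0:ℝ) else p0 x) = 0
      · have hvan : ∀ x, ¬ 0 < p1 x → p0 x = 0 := by
          intro x hx
          have h := (Finset.sum_eq_zero_iff_of_nonneg
            (fun x _ => by by_cases h : 0 < p1 x <;> simp [h, hp0.1 x])).1 hB x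
            (Finset.mem_univ x)
          simpa [hx] using h
        have hq0van : ∑ y, (if 0 < stocApply P p1 y then (0:ℝ)
            else stocApply P p0 y) = 0 := by
          refine Finset.sum_eq_zero fun y _ => ?_
          by_cases hy : 0 < stocApply P p1 y
          · simp [hy]
          · simp only [hy, if_false]
            have hz := q1_zero_forall hP hp1.1 hy
            rw [stocApply]
            refine Finset.sum_eq_zero fun x _ => ?_
            by_cases hx : 0 < p1 x
            · have hPx : P y x = 0 := by
                rcases mul_eq_zero.1 (hz x) with h | h
                · exact h
                · exact absurd h (ne_of_gt hx)
              rw [hPx, zero_mul]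
            · rw [hvan x hx, mul_zero]
        rw [fDiv, fDiv, hq0van, hB]
        simp only [EReal.coe_zero, zero_mul, add_zero]
        exact EReal.coe_le_coe_iff.2 (dpi_real_top hP hp0.1 hp1.1 hconv hvan)
      · have hBpos : 0 < ∑ x, (if 0 < p1 x then (0:ℝ) else p0 x) :=
          lt_of_le_of_ne (Finset.sum_nonneg fun x _ => by
            by_cases h : 0 < p1 x <;> simp [h, hp0.1 x]) (Ne.symm hB)
        have hptop : fDiv f p0 p1 = ⊤ := by
          rw [fDiv, htop, EReal.coe_mul_top_of_pos hBpos,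
            EReal.add_top_of_ne_bot (EReal.coe_ne_bot _)]
        rw [hptop]
        exact le_top
    · have hne_bot : recessionSlope f ≠ ⊥ := by
        intro hb
        have hsl := slope_le_recessionSlope hconv (z := 0) (t := 1) le_rfl zero_lt_one
        rw [hb, le_bot_iff] at hsl
        exact EReal.coe_ne_bot _ hsl
      obtain ⟨l, hrs⟩ : ∃ l : ℝ, recessionSlope f = (l : EReal) :=
        ⟨(recessionSlope f).toReal, (EReal.coe_toReal htop hne_bot).symm⟩
      have hslope : ∀ z t : ℝ, 0 ≤ z → 0 ≤ t → f (z + t) ≤ f z + t * l := by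
        intro z t hz ht
        rcases eq_or_lt_of_le ht with h | h
        · rw [← h]; simp
        · have hsl := slope_le_recessionSlope hconv hz h
          rw [hrs, EReal.coe_le_coe_iff, div_le_iff₀ h] at hsl
          linarith
      rw [fDiv_eq_sum hrs, fDiv_eq_sum hrs]
      exact EReal.coe_le_coe_iff.2 (dpi_real hP hp0.1 hp1.1 hconv l hslope)
  · -- Blackwell: separation argument
    intro hdiv
    have hY : Nonempty Y := by
      by_contra h
      rw [not_nonempty_iff] at h
      have h2 := hq0.2
      rw [Finset.univ_eq_empty, Finset.sum_empty] at h2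
      exact zero_ne_one h2
    have hne : (Finset.univ : Finset Y).Nonempty := Finset.univ_nonempty
    obtain ⟨y₀⟩ := hY
    set v : (X → Y) → (Y → ℝ) × (Y → ℝ) := fun g =>
      (stocApply (fun y x => if g x = y then 1 else 0) p0,
       stocApply (fun y x => if g x = y then 1 else 0) p1) with hv
    set K : Set ((Y → ℝ) × (Y → ℝ)) := convexHull ℝ (Set.range v) with hKdef
    by_cases hmem : ((q0, q1) : (Y → ℝ) × (Y → ℝ)) ∈ K
    · -- extract a stochastic matrix from the convex combination
      rw [hKdef, convexHull_eq] at hmem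
      obtain ⟨ι, t, w, zf, hw0, hw1, hzf, hcm⟩ := hmem
      simp only [Set.mem_range] at hzf
      have hch : ∀ i : ι, ∃ gg : X → Y, i ∈ t → v gg = zf i := by
        intro i
        by_cases hi : i ∈ t
        · obtain ⟨gg, hgg⟩ := hzf i hi
          exact ⟨gg, fun _ => hgg⟩
        · exact ⟨fun _ => y₀, fun h => absurd h hi⟩
      choose g hg using hch
      refine ⟨fun y x => ∑ i ∈ t, w i * (if g i x = y then 1 else 0), ⟨?_, ?_⟩, ?_, ?_⟩
      · intro y x
        refine Finset.sum_nonneg fun i hi => mul_nonneg (hw0 i hi) ?_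
        by_cases h : g i x = y <;> simp [h]
      · intro x
        rw [Finset.sum_comm]
        have h1 : ∀ i ∈ t, ∑ y, w i * (if g i x = y then (1:ℝ) else 0) = w i := by
          intro i _
          rw [← Finset.mul_sum]
          simp [Finset.sum_ite_eq]
        rw [Finset.sum_congr rfl h1, hw1]
      · -- maps p0 to q0
        have hq0' : q0 = fun y => ∑ i ∈ t, w i * (zf i).1 y := by
          have h1 : (t.centerMass w zf).1 = q0 := by rw [hcm]
          rw [Finset.centerMass, hw1, inv_one, one_smul] at h1
          funext y
          rw [← h1, Prod.fst_sum, Finset.sum_apply]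
          simp [Prod.smul_fst]
        funext y
        show ∑ x, (∑ i ∈ t, w i * (if g i x = y then (1:ℝ) else 0)) * p0 x = q0 y
        rw [hq0']
        calc ∑ x, (∑ i ∈ t, w i * (if g i x = y then (1:ℝ) else 0)) * p0 x
            = ∑ x, ∑ i ∈ t, (w i * (if g i x = y then (1:ℝ) else 0)) * p0 x := by
              refine Finset.sum_congr rfl fun x _ => ?_
              rw [Finset.sum_mul]
          _ = ∑ i ∈ t, ∑ x, (w i * (if g i x = y then (1:ℝ) else 0)) * p0 x :=
              Finset.sum_comm
          _ = ∑ i ∈ t, w i * (zf i).1 y := by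
              refine Finset.sum_congr rfl fun i hi => ?_
              rw [← hg i hi]
              show ∑ x, (w i * (if g i x = y then (1:ℝ) else 0)) * p0 x
                = w i * ∑ x, (if g i x = y then (1:ℝ) else 0) * p0 x
              rw [Finset.mul_sum]
              refine Finset.sum_congr rfl fun x _ => by ring
      · -- maps p1 to q1
        have hq1' : q1 = fun y => ∑ i ∈ t, w i * (zf i).2 y := by
          have h1 : (t.centerMass w zf).2 = q1 := by rw [hcm]
          rw [Finset.centerMass, hw1, inv_one, one_smul] at h1
          funext y
          rw [← h1, Prod.snd_sum, Finset.sum_apply]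
          simp [Prod.smul_snd]
        funext y
        show ∑ x, (∑ i ∈ t, w i * (if g i x = y then (1:ℝ) else 0)) * p1 x = q1 y
        rw [hq1']
        calc ∑ x, (∑ i ∈ t, w i * (if g i x = y then (1:ℝ) else 0)) * p1 x
            = ∑ x, ∑ i ∈ t, (w i * (if g i x = y then (1:ℝ) else 0)) * p1 x := by
              refine Finset.sum_congr rfl fun x _ => ?_
              rw [Finset.sum_mul]
          _ = ∑ i ∈ t, ∑ x, (w i * (if g i x = y then (1:ℝ) else 0)) * p1 x :=
              Finset.sum_comm
          _ = ∑ i ∈ t, w i * (zf i).2 y := by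
              refine Finset.sum_congr rfl fun i hi => ?_
              rw [← hg i hi]
              show ∑ x, (w i * (if g i x = y then (1:ℝ) else 0)) * p1 x
                = w i * ∑ x, (if g i x = y then (1:ℝ) else 0) * p1 x
              rw [Finset.mul_sum]
              refine Finset.sum_congr rfl fun x _ => by ring
    · exfalso
      have hKconv : Convex ℝ K := convex_convexHull ℝ _
      have hKclosed : IsClosed K := (Set.finite_range v).isClosed_convexHull (𝕜 := ℝ)
      obtain ⟨φ, u, hφK, hφq⟩ := geometric_hahn_banach_closed_point hKconv hKclosed hmem
      set a : Y → ℝ := fun y => φ ((Pi.single y 1 : Y → ℝ), (0 : Y → ℝ)) with ha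
      set b : Y → ℝ := fun y => φ ((0 : Y → ℝ), (Pi.single y 1 : Y → ℝ)) with hb
      have hsingle : ∀ r : Y → ℝ, ∑ y, r y • (Pi.single y (1:ℝ) : Y → ℝ) = r := by
        intro r
        funext j
        rw [Finset.sum_apply]
        simp [Pi.single_apply, Finset.sum_ite_eq]
      have hφ_eq : ∀ r s : Y → ℝ, φ (r, s) = ∑ y, r y * a y + ∑ y, s y * b y := by
        intro r s
        have hdecomp : ((r, s) : (Y → ℝ) × (Y → ℝ))
            = (∑ y, r y • (((Pi.single y 1 : Y → ℝ), (0 : Y → ℝ)) : (Y → ℝ) × (Y → ℝ)))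
              + ∑ y, s y • (((0 : Y → ℝ), (Pi.single y 1 : Y → ℝ)) : (Y → ℝ) × (Y → ℝ)) := by
          apply Prod.ext
          · simp only [Prod.fst_add, Prod.fst_sum, Prod.smul_fst, smul_zero,
              Finset.sum_const_zero, add_zero]
            exact (hsingle r).symm
          · simp only [Prod.snd_add, Prod.snd_sum, Prod.smul_snd, smul_zero,
              Finset.sum_const_zero, zero_add]
            exact (hsingle s).symm
        rw [hdecomp, map_add, map_sum, map_sum]
        simp only [_root_.map_smul, smul_eq_mul]
        rfl
      have hdet : ∀ g : X → Y, ∑ x, (a (g x) * p0 x + b (g x) * p1 x) < u := by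
        intro g
        have hvK : v g ∈ K := subset_convexHull ℝ _ (Set.mem_range_self g)
        have hlt := hφK _ hvK
        have h1 : ∀ (p : X → ℝ) (c : Y → ℝ),
            ∑ y, (∑ x, (if g x = y then (1:ℝ) else 0) * p x) * c y
              = ∑ x, c (g x) * p x := by
          intro p c
          calc ∑ y, (∑ x, (if g x = y then (1:ℝ) else 0) * p x) * c y
              = ∑ y, ∑ x, ((if g x = y then (1:ℝ) else 0) * p x) * c y := by
                refine Finset.sum_congr rfl fun y _ => ?_
                rw [Finset.sum_mul]
            _ = ∑ x, ∑ y, ((if g x = y then (1:ℝ) else 0) * p x) * c y :=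
                Finset.sum_comm
            _ = ∑ x, c (g x) * p x := by
                refine Finset.sum_congr rfl fun x _ => ?_
                have h2 : ∀ y, ((if g x = y then (1:ℝ) else 0) * p x) * c y
                    = if g x = y then p x * c y else 0 := by
                  intro y
                  by_cases h : g x = y <;> simp [h]
                rw [Finset.sum_congr rfl fun y _ => h2 y, Finset.sum_ite_eq]
                simp [mul_comm]
        have hφvg : φ (v g) = ∑ x, (a (g x) * p0 x + b (g x) * p1 x) := by
          rw [hv]
          show φ (stocApply (fun y x => if g x = y then 1 else 0) p0,
            stocApply (fun y x => if g x = y then 1 else 0) p1) = _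
          rw [hφ_eq]
          show (∑ y, (∑ x, (if g x = y then (1:ℝ) else 0) * p0 x) * a y)
              + (∑ y, (∑ x, (if g x = y then (1:ℝ) else 0) * p1 x) * b y) = _
          rw [h1 p0 a, h1 p1 b, ← Finset.sum_add_distrib]
        rw [hφvg] at hlt
        exact hlt
      have hqval : u < ∑ y, q0 y * a y + ∑ y, q1 y * b y := by
        rw [← hφ_eq]
        exact hφq
      have hconv := sup'_affine_convexOn hne a b
      have hcont : ContinuousOn (fun t : ℝ => Finset.univ.sup' hne fun y => a y * t + b y)
          (Set.Ici 0) :=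
        (sup'_continuous hne (fun y t => a y * t + b y) fun y => (continuous_const.mul continuous_id).add continuous_const).continuousOn
      have hd := hdiv _ hconv hcont
      rw [fDiv_sup'_affine hne a b hp0.1 hp1.1, fDiv_sup'_affine hne a b hq0.1 hq1.1,
        EReal.coe_le_coe_iff] at hd
      have hgex : ∀ x : X, ∃ y : Y,
          (Finset.univ.sup' hne fun y => a y * p0 x + b y * p1 x)
            = a y * p0 x + b y * p1 x := by
        intro x
        obtain ⟨y, _, hy⟩ := Finset.exists_mem_eq_sup' hne (fun y => a y * p0 x + b y * p1 x)
        exact ⟨y, hy⟩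
      choose g hg using hgex
      have h1 : ∑ x, (Finset.univ.sup' hne fun y => a y * p0 x + b y * p1 x)
          = ∑ x, (a (g x) * p0 x + b (g x) * p1 x) :=
        Finset.sum_congr rfl fun x _ => hg x
      have h2 : ∑ y, q0 y * a y + ∑ y, q1 y * b y
          ≤ ∑ y', Finset.univ.sup' hne fun y => a y * q0 y' + b y * q1 y' := by
        rw [← Finset.sum_add_distrib]
        refine Finset.sum_le_sum fun y' _ => ?_
        have h3 : a y' * q0 y' + b y' * q1 y'
            ≤ Finset.univ.sup' hne fun y => a y * q0 y' + b y * q1 y' :=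
          Finset.le_sup' (fun y => a y * q0 y' + b y * q1 y') (Finset.mem_univ y')
        linarith
      have h4 := hdet g
      linarith
end

section
/- Let f : [0,∞) → ℝ be convex and continuous. Suppose for every n a function D^Q_n, assigning a value in ℝ ∪ {+∞} to each pair of n×n density matrices, satisfies: (monotonicity) D^Q_k(Λ(σ0), Λ(σ1)) ≤ D^Q_n(σ0, σ1) for every CPTP map Λ from n×n to k×k complex matrices and all n×n density matrices σ0, σ1; and (classical agreement) for all probability vectors p0, p1 on a finite set, D^Q(diag(p0), diag(p1)) = D_f(p0‖p1). Then D^Q_n(σ0, σ1) ≤ D_f^max(σ0‖σ1) for all n and all n×n density matrices σ0, σ1. -/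
open Matrix
open scoped Kronecker ComplexOrder

open Matrix in
lemma kron_conjT {n m : ℕ} (A : Matrix (Fin n) (Fin n) ℂ) (B : Matrix (Fin m) (Fin m) ℂ) :
    (A ⊗ₖ B)ᴴ = Aᴴ ⊗ₖ Bᴴ := by
  ext ⟨a, b⟩ ⟨c, d⟩
  simp [Matrix.conjTranspose_apply, Matrix.kroneckerMap_apply]

open Matrix in
lemma kron_psd {n m : ℕ} {A : Matrix (Fin n) (Fin n) ℂ} {B : Matrix (Fin m) (Fin m) ℂ}
    (hA : A.PosSemidef) (hB : B.PosSemidef) : (A ⊗ₖ B).PosSemidef := by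
  obtain ⟨C, rfl⟩ : ∃ C : Matrix (Fin n) (Fin n) ℂ, A = Cᴴ * C := by
    open scoped MatrixOrder in exact CStarAlgebra.nonneg_iff_eq_star_mul_self.mp hA.nonneg
  obtain ⟨D, rfl⟩ : ∃ D : Matrix (Fin m) (Fin m) ℂ, B = Dᴴ * D := by
    open scoped MatrixOrder in exact CStarAlgebra.nonneg_iff_eq_star_mul_self.mp hB.nonneg
  rw [Matrix.mul_kronecker_mul, ← kron_conjT]
  exact Matrix.posSemidef_conjTranspose_mul_self _

/-- Any CPTP-monotone quantity agreeing with `D_f` on classical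
(diagonal) pairs is dominated by `D_f^max`. -/
theorem monotone_classical_le_DfMax (f : ℝ → ℝ)
    (hf : ConvexOn ℝ (Set.Ici 0) f) (hfc : ContinuousOn f (Set.Ici 0))
    (DQ : (n : ℕ) → Matrix (Fin n) (Fin n) ℂ → Matrix (Fin n) (Fin n) ℂ → EReal)
    (hmono : ∀ (n k : ℕ)
      (Λ : Matrix (Fin n) (Fin n) ℂ →ₗ[ℂ] Matrix (Fin k) (Fin k) ℂ), IsCPTP Λ →
      ∀ σ0 σ1 : Matrix (Fin n) (Fin n) ℂ,
        IsDensityMatrix σ0 → IsDensityMatrix σ1 →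
        DQ k (Λ σ0) (Λ σ1) ≤ DQ n σ0 σ1)
    (hclass : ∀ (m : ℕ) (p0 p1 : Fin m → ℝ), ProbVec p0 → ProbVec p1 →
      DQ m (Matrix.diagonal (fun i => (p0 i : ℂ)))
          (Matrix.diagonal (fun i => (p1 i : ℂ))) = fDiv f p0 p1)
    {n : ℕ} (σ0 σ1 : Matrix (Fin n) (Fin n) ℂ)
    (hσ0 : IsDensityMatrix σ0) (hσ1 : IsDensityMatrix σ1) :
    DQ n σ0 σ1 ≤ DfMax f σ0 σ1 := by
  refine le_sInf fun d hd => ?_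
  obtain ⟨m, q0, q1, ρ, hq0, hq1, hρ, h0, h1, rfl⟩ := hd
  rw [← hclass m q0 q1 hq0 hq1]
  -- the classical-to-quantum channel as a linear map
  set Λ : Matrix (Fin m) (Fin m) ℂ →ₗ[ℂ] Matrix (Fin n) (Fin n) ℂ :=
    { toFun := fun A => ∑ x, A x x • ρ x
      map_add' := fun A B => by
        simp [Matrix.add_apply, add_smul, Finset.sum_add_distrib]
      map_smul' := fun c A => by
        simp [Matrix.smul_apply, smul_smul, Finset.smul_sum] } with hΛ
  have hΛapp : ∀ A, Λ A = ∑ x, A x x • ρ x := fun A => rfl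
  have hdiag : ∀ (p : Fin m → ℝ), ProbVec p →
      IsDensityMatrix (Matrix.diagonal (fun i => (p i : ℂ))) := by
    intro p hp
    constructor
    · rw [Matrix.posSemidef_diagonal_iff]
      intro i
      exact_mod_cast (Complex.zero_le_real).2 (hp.1 i)
    · rw [Matrix.trace_diagonal]
      rw [← Complex.ofReal_sum]
      exact_mod_cast congrArg (Complex.ofReal) hp.2
  have hcptp : IsCPTP Λ := by
    constructor
    · intro A
      have : ∀ x, (ρ x).trace = 1 := fun x => (hρ x).2
      simp only [hΛapp, Matrix.trace_sum, Matrix.trace_smul, this, smul_eq_mul, mul_one]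
      simp [Matrix.trace, Matrix.diag]
    · have key : (∑ i : Fin m, ∑ j : Fin m,
          (Λ (Matrix.single i j 1)) ⊗ₖ (Matrix.single i j (1 : ℂ)))
          = ∑ i : Fin m, (ρ i) ⊗ₖ (Matrix.single i i (1 : ℂ)) := by
        refine Finset.sum_congr rfl fun i _ => ?_
        rw [Finset.sum_eq_single i]
        · congr 1
          rw [hΛapp, Finset.sum_eq_single i]
          · simp [Matrix.single]
          · intro x _ hx
            simp [Matrix.single, (Ne.symm hx)]
          · simp
        · intro j _ hj
          have : Λ (Matrix.single i j 1) = 0 := by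
            rw [hΛapp]
            refine Finset.sum_eq_zero fun x _ => ?_
            have : Matrix.single i j (1 : ℂ) x x = 0 := by
              simp only [Matrix.single, Matrix.of_apply, ite_eq_right_iff]
              rintro ⟨rfl, rfl⟩
              exact absurd rfl hj
            rw [this, zero_smul]
          rw [this, Matrix.zero_kronecker]
        · simp
      rw [key]
      refine Finset.sum_induction _ _ (fun a b ha hb => ha.add hb)
        (Matrix.PosSemidef.zero) fun i _ => ?_
      refine kron_psd (hρ i).1 ?_
      have : Matrix.single i i (1 : ℂ)
          = (Matrix.single i i (1 : ℂ))ᴴ * Matrix.single i i (1 : ℂ) := by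
        rw [show (Matrix.single i i (1 : ℂ))ᴴ = Matrix.single i i (1 : ℂ) by
          ext a b; simp [Matrix.conjTranspose_apply, Matrix.single, and_comm]
            <;> split <;> simp_all]
        rw [Matrix.single_mul_single_same, mul_one]
      rw [this]
      exact Matrix.posSemidef_conjTranspose_mul_self _
  have e0 : Λ (Matrix.diagonal (fun i => (q0 i : ℂ))) = σ0 := by
    rw [hΛapp, ← h0]
    simp [cqApply, Matrix.diagonal_apply_eq]
  have e1 : Λ (Matrix.diagonal (fun i => (q1 i : ℂ))) = σ1 := by
    rw [hΛapp, ← h1]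
    simp [cqApply, Matrix.diagonal_apply_eq]
  calc DQ n σ0 σ1 = DQ n (Λ (Matrix.diagonal (fun i => (q0 i : ℂ))))
        (Λ (Matrix.diagonal (fun i => (q1 i : ℂ)))) := by rw [e0, e1]
    _ ≤ DQ m (Matrix.diagonal (fun i => (q0 i : ℂ)))
        (Matrix.diagonal (fun i => (q1 i : ℂ))) :=
      hmono m n Λ hcptp _ _ (hdiag q0 hq0) (hdiag q1 hq1)
end

section
/- For all n×n density matrices σ0, σ1 there exist a finite set X, probability vectors q0, q1 on X, and a classical-to-quantum channel Γ with Γ(q0) = σ0 and Γ(q1) = σ1, such that D_f(q0‖q1) = F_f(σ0, σ1) holds simultaneously for every convex continuous function f : [0,∞) → ℝ. -/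
open Matrix
open scoped Kronecker ComplexOrder

section AuxLemmas
open Matrix
open scoped ComplexOrder
variable {n : ℕ} {A B : Matrix (Fin n) (Fin n) ℂ} {f g : ℝ → ℝ}

lemma hermCFC_eq (hA : A.IsHermitian) (f : ℝ → ℝ) : hermCFC f A =
    (hA.eigenvectorUnitary : Matrix (Fin n) (Fin n) ℂ) *
      Matrix.diagonal (fun i => (f (hA.eigenvalues i) : ℂ)) *
      (star (hA.eigenvectorUnitary : Matrix (Fin n) (Fin n) ℂ)) := dif_pos hA

lemma diag_selfAdjoint (v : Fin n → ℝ) (f : ℝ → ℝ) :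
    Matrix.IsHermitian (Matrix.diagonal (fun i => (f (v i) : ℂ))) :=
  isHermitian_diagonal_of_self_adjoint _ (by
    ext i
    exact Complex.conj_ofReal _)

lemma hermCFC_isHermitian (f : ℝ → ℝ) (A : Matrix (Fin n) (Fin n) ℂ) :
    (hermCFC f A).IsHermitian := by
  unfold hermCFC
  split
  · rename_i hA
    rw [Matrix.star_eq_conjTranspose]
    exact isHermitian_mul_mul_conjTranspose _ (diag_selfAdjoint hA.eigenvalues f)
  · exact Matrix.isHermitian_zero

lemma hermCFC_mul (hA : A.IsHermitian) (f g : ℝ → ℝ) :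
    hermCFC f A * hermCFC g A = hermCFC (fun x => f x * g x) A := by
  rw [hermCFC_eq hA, hermCFC_eq hA, hermCFC_eq hA]
  have h1 : star (hA.eigenvectorUnitary : Matrix (Fin n) (Fin n) ℂ) *
      (hA.eigenvectorUnitary : Matrix (Fin n) (Fin n) ℂ) = 1 :=
    Matrix.mem_unitaryGroup_iff'.mp hA.eigenvectorUnitary.2
  calc _ = (hA.eigenvectorUnitary : Matrix (Fin n) (Fin n) ℂ) *
      (Matrix.diagonal (fun i => (f (hA.eigenvalues i) : ℂ)) *
        (star (hA.eigenvectorUnitary : Matrix (Fin n) (Fin n) ℂ) *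
          (hA.eigenvectorUnitary : Matrix (Fin n) (Fin n) ℂ)) *
        Matrix.diagonal (fun i => (g (hA.eigenvalues i) : ℂ))) *
      (star (hA.eigenvectorUnitary : Matrix (Fin n) (Fin n) ℂ)) := by
        simp only [Matrix.mul_assoc]
    _ = _ := by
        rw [h1, Matrix.mul_one, Matrix.diagonal_mul_diagonal]
        simp only [Matrix.mul_assoc]
        congr 2
        ext i
        push_cast
        ring

lemma hermCFC_congr (hA : A.PosSemidef) (h : ∀ x : ℝ, 0 ≤ x → f x = g x) :
    hermCFC f A = hermCFC g A := by
  rw [hermCFC_eq hA.1, hermCFC_eq hA.1]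
  have : (fun i => (f (hA.1.eigenvalues i) : ℂ)) = fun i => (g (hA.1.eigenvalues i) : ℂ) := by
    funext i
    rw [h _ (hA.eigenvalues_nonneg i)]
  rw [this]

lemma hermCFC_id (hA : A.IsHermitian) : hermCFC (fun x => x) A = A := by
  rw [hermCFC_eq hA]
  exact hA.spectral_theorem.symm

lemma hermCFC_posSemidef (hA : A.PosSemidef) (hf : ∀ x : ℝ, 0 ≤ x → 0 ≤ f x) :
    (hermCFC f A).PosSemidef := by
  rw [hermCFC_eq hA.1, Matrix.star_eq_conjTranspose]
  exact (Matrix.posSemidef_diagonal_iff.mpr fun i => by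
    rw [Complex.zero_le_real]
    exact hf _ (hA.eigenvalues_nonneg i)).mul_mul_conjTranspose_same _
variable {n : ℕ} {A B : Matrix (Fin n) (Fin n) ℂ} {f g : ℝ → ℝ}

lemma herm_trace_real (hA : A.IsHermitian) : A.trace = (A.trace.re : ℂ) := by
  have h : star A.trace = A.trace := by
    rw [← Matrix.trace_conjTranspose, hA.eq]
  exact (Complex.conj_eq_iff_re.mp h).symm

lemma psd_diag_real (hA : A.PosSemidef) (i : Fin n) : A i i = ((A i i).re : ℂ) := by
  have h : star (A i i) = A i i := by
    conv_rhs => rw [← hA.1.eq]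
    simp [Matrix.conjTranspose_apply]
  exact (Complex.conj_eq_iff_re.mp h).symm

lemma psd_diag_nonneg (hA : A.PosSemidef) (i : Fin n) : 0 ≤ (A i i).re := by
  have h := hA.dotProduct_mulVec_nonneg (Pi.single i 1)
  have h2 : star (Pi.single i (1:ℂ)) ⬝ᵥ (A *ᵥ Pi.single i 1) = A i i := by
    simp [dotProduct, Matrix.mulVec_single, Pi.single_apply, apply_ite (star : ℂ → ℂ),
      Finset.sum_ite_eq']
  rw [h2] at h
  exact (Complex.nonneg_iff.mp h).1

lemma psd_trace_re_nonneg (hA : A.PosSemidef) : 0 ≤ A.trace.re := by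
  rw [Matrix.trace]
  rw [Complex.re_sum]
  exact Finset.sum_nonneg fun i _ => psd_diag_nonneg hA i

lemma trace_self_mul_conjTranspose_eq_zero {m k : ℕ} (A : Matrix (Fin m) (Fin k) ℂ)
    (h : (A * Aᴴ).trace = 0) : A = 0 := by
  rw [Matrix.trace] at h
  have hnn : ∀ i, 0 ≤ (A * Aᴴ).diag i := fun i => by
    rw [Matrix.diag_apply, Matrix.mul_apply]
    exact Finset.sum_nonneg fun j _ => by
      simpa [Matrix.conjTranspose_apply] using mul_star_self_nonneg (A i j)
  have hz := (Finset.sum_eq_zero_iff_of_nonneg (fun i _ => hnn i)).mp h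
  ext i j
  have hii := hz i (Finset.mem_univ i)
  rw [Matrix.diag_apply, Matrix.mul_apply] at hii
  have hdp : (A i) ⬝ᵥ star (A i) = 0 := by
    simpa [dotProduct, Matrix.conjTranspose_apply] using hii
  have hrow := dotProduct_self_star_eq_zero.mp hdp
  exact (congr_fun hrow j).trans rfl

lemma psd_trace_zero (hA : A.PosSemidef) (h : A.trace = 0) : A = 0 := by
  have hs : (hermCFC Real.sqrt A).IsHermitian := hermCFC_isHermitian _ _
  have hss : hermCFC Real.sqrt A * hermCFC Real.sqrt A = A := by
    rw [hermCFC_mul hA.1, hermCFC_congr hA (f := fun x => Real.sqrt x * Real.sqrt x)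
      (g := fun x => x) (fun x hx => Real.mul_self_sqrt hx), hermCFC_id hA.1]
  have hmul : hermCFC Real.sqrt A * (hermCFC Real.sqrt A)ᴴ = A := by
    rw [hs.eq, hss]
  have := trace_self_mul_conjTranspose_eq_zero (hermCFC Real.sqrt A) (by rw [hmul, h])
  rw [← hss, this, Matrix.mul_zero]

lemma psd_smul_real (hA : A.PosSemidef) {c : ℝ} (hc : 0 ≤ c) :
    ((c : ℂ) • A).PosSemidef := by
  constructor
  · rw [Matrix.IsHermitian, Matrix.conjTranspose_smul, hA.1.eq]
    congr 1
    simp [Complex.conj_ofReal]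
  · intro x
    exact (hA.smul (Complex.zero_le_real.mpr hc)).2 x

lemma sum_stdBasis_smul {k : ℕ} (d : Fin k → ℂ) :
    ∑ i, d i • Matrix.single i i (1:ℂ) = Matrix.diagonal d := by
  ext r s
  rw [Matrix.sum_apply]
  simp only [Matrix.smul_apply, Matrix.single, Matrix.of_apply,
    Matrix.diagonal, smul_eq_mul, mul_ite, mul_one, mul_zero]
  by_cases h : r = s
  · subst h
    simp
  · rw [Finset.sum_eq_zero, if_neg h]
    intro i _
    rw [if_neg]
    rintro ⟨rfl, rfl⟩
    exact h rfl

lemma sum_stdBasis {k : ℕ} : ∑ i : Fin k, Matrix.single i i (1:ℂ) = (1 : Matrix (Fin k) (Fin k) ℂ) := by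
  have := sum_stdBasis_smul (fun _ : Fin k => (1:ℂ))
  simp only [one_smul] at this
  rw [this, Matrix.diagonal_one]

lemma trace_stdBasis_mul {k : ℕ} (i : Fin k) (M : Matrix (Fin k) (Fin k) ℂ) :
    (Matrix.single i i (1:ℂ) * M).trace = M i i := by
  rw [Matrix.trace]
  rw [Finset.sum_eq_single i]
  · rw [Matrix.diag_apply, Matrix.single_mul_apply_same, one_mul]
  · intro b _ hb
    exact Matrix.single_mul_apply_of_ne 1 i i b b hb M
  · intro h
    exact absurd (Finset.mem_univ i) h
section FC
variable {n : ℕ} {σ : Matrix (Fin n) (Fin n) ℂ}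

lemma hermCFC_funext {f g : ℝ → ℝ} (h : ∀ x, f x = g x) (A : Matrix (Fin n) (Fin n) ℂ) :
    hermCFC f A = hermCFC g A := by
  have : f = g := funext h
  rw [this]

lemma sqrt_mul_sqrt (hσ : σ.PosSemidef) :
    hermCFC Real.sqrt σ * hermCFC Real.sqrt σ = σ := by
  rw [hermCFC_mul hσ.1, hermCFC_congr hσ (f := fun x => Real.sqrt x * Real.sqrt x)
    (g := fun x => x) (fun x hx => Real.mul_self_sqrt hx), hermCFC_id hσ.1]

lemma sqrt_mul_invSqrt (hσ : σ.PosSemidef) :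
    hermCFC Real.sqrt σ * invSqrtMat σ = rangeProj σ := by
  rw [invSqrtMat, rangeProj, hermCFC_mul hσ.1]
  exact hermCFC_congr hσ fun x hx => by
    by_cases h : x = 0
    · simp [h]
    · have hx' : 0 < x := lt_of_le_of_ne hx (Ne.symm h)
      simp only [if_neg h]
      rw [mul_inv_cancel₀ (ne_of_gt (Real.sqrt_pos.mpr hx'))]

lemma invSqrt_mul_sqrt (hσ : σ.PosSemidef) :
    invSqrtMat σ * hermCFC Real.sqrt σ = rangeProj σ := by
  rw [invSqrtMat, rangeProj, hermCFC_mul hσ.1]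
  exact hermCFC_congr hσ fun x hx => by
    by_cases h : x = 0
    · simp [h]
    · have hx' : 0 < x := lt_of_le_of_ne hx (Ne.symm h)
      simp only [if_neg h]
      rw [inv_mul_cancel₀ (ne_of_gt (Real.sqrt_pos.mpr hx'))]

lemma invSqrt_mul_invSqrt (hσ : σ.PosSemidef) :
    invSqrtMat σ * invSqrtMat σ = pinvMat σ := by
  rw [invSqrtMat, pinvMat, hermCFC_mul hσ.1]
  exact hermCFC_congr hσ fun x hx => by
    by_cases h : x = 0
    · simp [h]
    · have hx' : 0 < x := lt_of_le_of_ne hx (Ne.symm h)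
      simp only [if_neg h]
      rw [← mul_inv, Real.mul_self_sqrt hx]

lemma rangeProj_sq (hσ : σ.IsHermitian) :
    rangeProj σ * rangeProj σ = rangeProj σ := by
  rw [rangeProj, hermCFC_mul hσ]
  exact hermCFC_funext (fun x => by by_cases h : x = 0 <;> simp [h]) σ

lemma rangeProj_isHermitian : (rangeProj σ).IsHermitian := hermCFC_isHermitian _ _

lemma pinv_isHermitian : (pinvMat σ).IsHermitian := hermCFC_isHermitian _ _

lemma invSqrt_isHermitian : (invSqrtMat σ).IsHermitian := hermCFC_isHermitian _ _

lemma pinv_mul_self (hσ : σ.IsHermitian) : pinvMat σ * σ = rangeProj σ := by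
  rw [pinvMat]
  nth_rewrite 2 [← hermCFC_id hσ]
  rw [hermCFC_mul hσ, rangeProj]
  exact hermCFC_funext (fun x => by by_cases h : x = 0 <;> simp [h, inv_mul_cancel₀]) σ

lemma self_mul_pinv (hσ : σ.IsHermitian) : σ * pinvMat σ = rangeProj σ := by
  rw [pinvMat]
  nth_rewrite 1 [← hermCFC_id hσ]
  rw [hermCFC_mul hσ, rangeProj]
  exact hermCFC_funext (fun x => by by_cases h : x = 0 <;> simp [h, mul_inv_cancel₀]) σ

lemma pinv_mul_rangeProj (hσ : σ.IsHermitian) : pinvMat σ * rangeProj σ = pinvMat σ := by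
  rw [pinvMat, rangeProj, hermCFC_mul hσ]
  exact hermCFC_funext (fun x => by by_cases h : x = 0 <;> simp [h]) σ

lemma rangeProj_mul_pinv (hσ : σ.IsHermitian) : rangeProj σ * pinvMat σ = pinvMat σ := by
  rw [pinvMat, rangeProj, hermCFC_mul hσ]
  exact hermCFC_funext (fun x => by by_cases h : x = 0 <;> simp [h]) σ

lemma rangeProj_mul_self (hσ : σ.IsHermitian) : rangeProj σ * σ = σ := by
  rw [rangeProj]
  nth_rewrite 2 [← hermCFC_id hσ]
  nth_rewrite 3 [← hermCFC_id hσ]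
  rw [hermCFC_mul hσ]
  exact hermCFC_funext (fun x => by by_cases h : x = 0 <;> simp [h]) σ

lemma self_mul_rangeProj (hσ : σ.IsHermitian) : σ * rangeProj σ = σ := by
  rw [rangeProj]
  nth_rewrite 1 [← hermCFC_id hσ]
  nth_rewrite 3 [← hermCFC_id hσ]
  rw [hermCFC_mul hσ]
  exact hermCFC_funext (fun x => by by_cases h : x = 0 <;> simp [h]) σ

lemma pinv_mul_self_mul_pinv (hσ : σ.IsHermitian) :
    pinvMat σ * σ * pinvMat σ = pinvMat σ := by
  rw [pinv_mul_self hσ, rangeProj_mul_pinv hσ]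

lemma sqrt_isHermitian : (hermCFC Real.sqrt σ).IsHermitian := hermCFC_isHermitian _ _

end FC
section Schur
variable {n : ℕ} {σ0 π : Matrix (Fin n) (Fin n) ℂ}

lemma schur_pack (hσ0 : σ0.PosSemidef) (hπ2 : π * π = π) (hπh : π.IsHermitian) :
    (schurCompl σ0 π).PosSemidef ∧ (σ0 - schurCompl σ0 π).PosSemidef ∧
    π * schurCompl σ0 π = schurCompl σ0 π ∧ schurCompl σ0 π * π = schurCompl σ0 π := by
  set D : Matrix (Fin n) (Fin n) ℂ := (1 - π) * σ0 * (1 - π) with hD_def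
  have h1πh : (1 - π).IsHermitian := by
    rw [Matrix.IsHermitian, Matrix.conjTranspose_sub, Matrix.conjTranspose_one, hπh.eq]
  have hD : D.PosSemidef := by
    have := hσ0.mul_mul_conjTranspose_same (1 - π)
    rwa [h1πh.eq] at this
  set θ : Matrix (Fin n) (Fin n) ℂ := rangeProj D with hθ_def
  set E : Matrix (Fin n) (Fin n) ℂ := pinvMat D with hE_def
  set B : Matrix (Fin n) (Fin n) ℂ := π * σ0 * (1 - π) with hB_def
  set B' : Matrix (Fin n) (Fin n) ℂ := (1 - π) * σ0 * π with hB'_def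
  have hθh : θ.IsHermitian := rangeProj_isHermitian
  have hEh : E.IsHermitian := pinv_isHermitian
  have hBB' : Bᴴ = B' := by
    rw [hB_def, hB'_def, Matrix.conjTranspose_mul, Matrix.conjTranspose_mul,
      h1πh.eq, hσ0.1.eq, hπh.eq, Matrix.mul_assoc]
  have h1ππ : (1 - π) * π = 0 := by
    rw [Matrix.sub_mul, Matrix.one_mul, hπ2, sub_self]
  have hπ1π : π * (1 - π) = 0 := by
    rw [Matrix.mul_sub, Matrix.mul_one, hπ2, sub_self]
  have hπB : π * B = B := by
    rw [hB_def, ← Matrix.mul_assoc, ← Matrix.mul_assoc, hπ2]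
  have hB'π : B' * π = B' := by
    rw [hB'_def, Matrix.mul_assoc, Matrix.mul_assoc, hπ2, ← Matrix.mul_assoc]
  have hDπ : D * π = 0 := by
    rw [hD_def, Matrix.mul_assoc, h1ππ, Matrix.mul_zero]
  have hθπ : θ * π = 0 := by
    rw [hθ_def, ← pinv_mul_self hD.1, ← hE_def, Matrix.mul_assoc, hDπ, Matrix.mul_zero]
  have hπθ : π * θ = 0 := by
    have := congrArg Matrix.conjTranspose hθπ
    rwa [Matrix.conjTranspose_mul, hθh.eq, hπh.eq, Matrix.conjTranspose_zero] at this
  have hEπ : E * π = 0 := by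
    rw [hE_def, ← pinv_mul_rangeProj hD.1, ← hθ_def, Matrix.mul_assoc, hθπ, Matrix.mul_zero]
  have hπE : π * E = 0 := by
    have := congrArg Matrix.conjTranspose hEπ
    rwa [Matrix.conjTranspose_mul, hEh.eq, hπh.eq, Matrix.conjTranspose_zero] at this
  have hE1π : E * (1 - π) = E := by
    rw [Matrix.mul_sub, Matrix.mul_one, hEπ, sub_zero]
  have h1πE : (1 - π) * E = E := by
    rw [Matrix.sub_mul, Matrix.one_mul, hπE, sub_zero]
  have hθD : θ * D = D := by rw [hθ_def]; exact rangeProj_mul_self hD.1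
  have hDθ : D * θ = D := by rw [hθ_def]; exact self_mul_rangeProj hD.1
  have hEDE : E * D * E = E := by rw [hE_def]; exact pinv_mul_self_mul_pinv hD.1
  have hPherm : (1 - π - θ).IsHermitian := by
    rw [Matrix.IsHermitian, Matrix.conjTranspose_sub, Matrix.conjTranspose_sub,
      Matrix.conjTranspose_one, hπh.eq, hθh.eq]
  have hPeq : (1 - π) * (1 - θ) = 1 - π - θ := by
    rw [Matrix.mul_sub, Matrix.mul_one, Matrix.sub_mul, Matrix.one_mul, hπθ, sub_zero]
  have hPeq' : (1 - θ) * (1 - π) = 1 - π - θ := by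
    rw [Matrix.mul_sub, Matrix.mul_one, Matrix.sub_mul, Matrix.one_mul, hθπ, sub_zero]
    abel
  have hPσP : (1 - π - θ) * σ0 * (1 - π - θ) = 0 := by
    calc (1 - π - θ) * σ0 * (1 - π - θ)
        = ((1 - θ) * (1 - π)) * σ0 * ((1 - π) * (1 - θ)) := by rw [hPeq, hPeq']
      _ = (1 - θ) * ((1 - π) * σ0 * (1 - π)) * (1 - θ) := by
          simp only [Matrix.mul_assoc]
      _ = (1 - θ) * D * (1 - θ) := by rw [← hD_def]
      _ = 0 := by
          rw [Matrix.mul_sub, Matrix.mul_one, Matrix.sub_mul, Matrix.sub_mul,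
            Matrix.one_mul, hθD]
          abel
  have hσ0P : σ0 * (1 - π - θ) = 0 := by
    have hss : (hermCFC Real.sqrt σ0) * (hermCFC Real.sqrt σ0) = σ0 := sqrt_mul_sqrt hσ0
    have hsh : (hermCFC Real.sqrt σ0).IsHermitian := sqrt_isHermitian
    have hkey : ((hermCFC Real.sqrt σ0) * (1 - π - θ))ᴴ * ((hermCFC Real.sqrt σ0) * (1 - π - θ)) = 0 := by
      rw [Matrix.conjTranspose_mul, hsh.eq, hPherm.eq]
      simp only [Matrix.mul_assoc]
      rw [← Matrix.mul_assoc (hermCFC Real.sqrt σ0) (hermCFC Real.sqrt σ0), hss, ← Matrix.mul_assoc, hPσP]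
    have hz := Matrix.conjTranspose_mul_self_eq_zero.mp hkey
    rw [← hss, Matrix.mul_assoc, hz, Matrix.mul_zero]
  have hBθ : B * θ = B := by
    have h0 : B * (1 - θ) = 0 := by
      calc B * (1 - θ) = π * (σ0 * ((1 - π) * (1 - θ))) := by
            rw [hB_def]; simp only [Matrix.mul_assoc]
        _ = π * (σ0 * (1 - π - θ)) := by rw [hPeq]
        _ = 0 := by rw [hσ0P, Matrix.mul_zero]
    have := congrArg (fun X => B - X) h0
    simpa [Matrix.mul_sub, Matrix.mul_one] using this
  have hθB' : θ * B' = B' := by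
    have := congrArg Matrix.conjTranspose hBθ
    rwa [Matrix.conjTranspose_mul, hθh.eq, hBB'] at this
  -- key absorption identities
  have hπσ0E : π * σ0 * E = B * E := by
    calc π * σ0 * E = π * σ0 * ((1 - π) * E) := by rw [h1πE]
      _ = (π * σ0 * (1 - π)) * E := by simp only [Matrix.mul_assoc]
      _ = B * E := by rw [← hB_def]
  have hEσ0π : E * (σ0 * π) = E * B' := by
    calc E * (σ0 * π) = (E * (1 - π)) * (σ0 * π) := by rw [hE1π]
      _ = E * ((1 - π) * σ0 * π) := by simp only [Matrix.mul_assoc]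
      _ = E * B' := by rw [← hB'_def]
  have hEσ0E : E * (σ0 * E) = E := by
    calc E * (σ0 * E) = (E * (1 - π)) * (σ0 * ((1 - π) * E)) := by rw [hE1π, h1πE]
      _ = E * ((1 - π) * σ0 * (1 - π)) * E := by simp only [Matrix.mul_assoc]
      _ = E * D * E := by rw [← hD_def]
      _ = E := hEDE
  -- schurCompl = K σ0 Kᴴ
  have hsc : schurCompl σ0 π = π * σ0 * π - B * E * B' := by
    rw [schurCompl, ← hB_def, ← hB'_def, ← hD_def, ← hE_def]
  have hKh : (π - B * E)ᴴ = π - E * B' := by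
    rw [Matrix.conjTranspose_sub, hπh.eq, Matrix.conjTranspose_mul, hEh.eq, hBB']
  have hKσ0K : (π - B * E) * σ0 * (π - B * E)ᴴ = schurCompl σ0 π := by
    rw [hKh, hsc]
    simp only [Matrix.sub_mul, Matrix.mul_sub]
    have t1 : π * σ0 * (E * B') = B * E * B' := by
      rw [← Matrix.mul_assoc, hπσ0E, Matrix.mul_assoc]
    have t2 : B * E * σ0 * (E * B') = B * E * B' := by
      simp only [Matrix.mul_assoc]
      rw [← Matrix.mul_assoc σ0 E B', ← Matrix.mul_assoc E (σ0 * E) B', hEσ0E]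
    have t3 : B * E * σ0 * π = B * E * B' := by
      rw [Matrix.mul_assoc (B * E) σ0 π, Matrix.mul_assoc B E (σ0 * π), hEσ0π,
        ← Matrix.mul_assoc]
    rw [t1, t2, t3]
    abel
  have hschur_psd : (schurCompl σ0 π).PosSemidef := by
    rw [← hKσ0K]
    exact hσ0.mul_mul_conjTranspose_same _
  -- σ0 - schurCompl = M Mᴴ
  have hSh : (invSqrtMat D).IsHermitian := invSqrt_isHermitian
  have hRh : (hermCFC Real.sqrt D).IsHermitian := sqrt_isHermitian
  have hMh : (B * invSqrtMat D + hermCFC Real.sqrt D)ᴴ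
      = invSqrtMat D * B' + hermCFC Real.sqrt D := by
    rw [Matrix.conjTranspose_add, Matrix.conjTranspose_mul, hSh.eq, hRh.eq, hBB']
  have hdec : σ0 = π * σ0 * π + B + B' + D := by
    rw [hB_def, hB'_def, hD_def]
    noncomm_ring
  have hMM : (B * invSqrtMat D + hermCFC Real.sqrt D) *
      (B * invSqrtMat D + hermCFC Real.sqrt D)ᴴ = σ0 - schurCompl σ0 π := by
    rw [hMh, Matrix.add_mul, Matrix.mul_add, Matrix.mul_add]
    have u1 : B * invSqrtMat D * (invSqrtMat D * B') = B * E * B' := by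
      rw [Matrix.mul_assoc B _ _, ← Matrix.mul_assoc (invSqrtMat D) (invSqrtMat D) B',
        invSqrt_mul_invSqrt hD, ← hE_def, ← Matrix.mul_assoc, Matrix.mul_assoc B E B',
        ← Matrix.mul_assoc]
    have u2 : B * invSqrtMat D * hermCFC Real.sqrt D = B := by
      rw [Matrix.mul_assoc, invSqrt_mul_sqrt hD, ← hθ_def, hBθ]
    have u3 : hermCFC Real.sqrt D * (invSqrtMat D * B') = B' := by
      rw [← Matrix.mul_assoc, sqrt_mul_invSqrt hD, ← hθ_def, hθB']
    have u4 : hermCFC Real.sqrt D * hermCFC Real.sqrt D = D := sqrt_mul_sqrt hD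
    rw [u1, u2, u3, u4, hsc, eq_sub_iff_add_eq]
    nth_rewrite 2 [hdec]
    abel
  have hdiff_psd : (σ0 - schurCompl σ0 π).PosSemidef := by
    rw [← hMM]
    exact Matrix.posSemidef_self_mul_conjTranspose _
  have hπs : π * schurCompl σ0 π = schurCompl σ0 π := by
    rw [hsc, Matrix.mul_sub]
    simp only [← Matrix.mul_assoc]
    rw [hπ2, hπB]
  have hsπ : schurCompl σ0 π * π = schurCompl σ0 π := by
    rw [hsc, Matrix.sub_mul]
    simp only [Matrix.mul_assoc]
    rw [hπ2, hB'π]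
  exact ⟨hschur_psd, hdiff_psd, hπs, hsπ⟩

end Schur
section Trc
variable {n : ℕ} {A : Matrix (Fin n) (Fin n) ℂ}

lemma stdBasis_conjTranspose (i : Fin n) :
    (Matrix.single i i (1:ℂ))ᴴ = Matrix.single i i 1 := by
  ext j k
  simp [Matrix.conjTranspose_apply, Matrix.single, Matrix.of_apply,
    apply_ite (star : ℂ → ℂ), and_comm]

lemma trace_mul_hermCFC (hA : A.IsHermitian) (B : Matrix (Fin n) (Fin n) ℂ) (f : ℝ → ℝ) :
    (B * hermCFC f A).trace = ∑ i,
      ((star (hA.eigenvectorUnitary : Matrix (Fin n) (Fin n) ℂ) * B *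
        (hA.eigenvectorUnitary : Matrix (Fin n) (Fin n) ℂ)) i i) * (f (hA.eigenvalues i) : ℂ) := by
  rw [hermCFC_eq hA]
  set U : Matrix (Fin n) (Fin n) ℂ := (hA.eigenvectorUnitary : Matrix (Fin n) (Fin n) ℂ)
  set Dm : Matrix (Fin n) (Fin n) ℂ :=
    Matrix.diagonal (fun i => (f (hA.eigenvalues i) : ℂ))
  have h1 : B * (U * Dm * star U) = (B * U * Dm) * star U := by
    simp only [Matrix.mul_assoc]
  rw [h1, Matrix.trace_mul_comm]
  have h2 : star U * (B * U * Dm) = (star U * B * U) * Dm := by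
    simp only [Matrix.mul_assoc]
  rw [h2, Matrix.trace]
  congr 1
  ext i
  rw [Matrix.diag_apply, Matrix.mul_diagonal]

end Trc

end AuxLemmas

/-- There is a single classical family and channel realizing
`(σ0, σ1)` whose `f`-divergence equals `F_f(σ0,σ1)` simultaneously for all
convex continuous `f`. -/
theorem exists_repr_achieving_Ff {n : ℕ} (σ0 σ1 : Matrix (Fin n) (Fin n) ℂ)
    (hσ0 : IsDensityMatrix σ0) (hσ1 : IsDensityMatrix σ1) :
    ∃ (m : ℕ) (q0 q1 : Fin m → ℝ) (ρ : Fin m → Matrix (Fin n) (Fin n) ℂ),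
      ProbVec q0 ∧ ProbVec q1 ∧ (∀ x, IsDensityMatrix (ρ x)) ∧
      cqApply ρ q0 = σ0 ∧ cqApply ρ q1 = σ1 ∧
      ∀ f : ℝ → ℝ, ConvexOn ℝ (Set.Ici 0) f → ContinuousOn f (Set.Ici 0) →
        fDiv f q0 q1 = Ff f σ0 σ1 := by
  obtain ⟨hσ0p, hσ0t⟩ := hσ0
  obtain ⟨hσ1p, hσ1t⟩ := hσ1
  have hπh : (rangeProj σ1).IsHermitian := rangeProj_isHermitian
  have hπ2 : rangeProj σ1 * rangeProj σ1 = rangeProj σ1 := rangeProj_sq hσ1p.1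
  obtain ⟨hst_psd, hdiff_psd, hπst, hstπ⟩ := schur_pack hσ0p hπ2 hπh
  set π : Matrix (Fin n) (Fin n) ℂ := rangeProj σ1 with hπ_def
  set σt : Matrix (Fin n) (Fin n) ℂ := sigmaTilde σ0 σ1 with hσt_def
  have hσt_eq : σt = schurCompl σ0 π := rfl
  rw [← hσt_eq] at hst_psd hdiff_psd hπst hstπ
  have hσth : σt.IsHermitian := hst_psd.1
  set S1 : Matrix (Fin n) (Fin n) ℂ := invSqrtMat σ1 with hS1_def
  set r : Matrix (Fin n) (Fin n) ℂ := hermCFC Real.sqrt σ1 with hr_def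
  have hS1h : S1.IsHermitian := invSqrt_isHermitian
  have hrh : r.IsHermitian := sqrt_isHermitian
  have hrr : r * r = σ1 := sqrt_mul_sqrt hσ1p
  have hrS1 : r * S1 = π := sqrt_mul_invSqrt hσ1p
  have hS1r : S1 * r = π := invSqrt_mul_sqrt hσ1p
  set A : Matrix (Fin n) (Fin n) ℂ := S1 * σt * S1 with hA_def
  have hApsd : A.PosSemidef := by
    have := hst_psd.conjTranspose_mul_mul_same S1
    rwa [hS1h.eq] at this
  have hAh : A.IsHermitian := hApsd.1
  have hrAr : r * A * r = σt := by
    rw [hA_def]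
    calc r * (S1 * σt * S1) * r = (r * S1) * σt * (S1 * r) := by
          simp only [Matrix.mul_assoc]
      _ = σt := by rw [hrS1, hS1r, hπst, hstπ]
  -- spectral data for A
  set U : Matrix (Fin n) (Fin n) ℂ := (hAh.eigenvectorUnitary : Matrix (Fin n) (Fin n) ℂ)
    with hU_def
  set a : Fin n → ℝ := hAh.eigenvalues with ha_def
  have ha0 : ∀ i, 0 ≤ a i := fun i => hApsd.eigenvalues_nonneg i
  have hUU : U * star U = 1 := Matrix.mem_unitaryGroup_iff.mp hAh.eigenvectorUnitary.2
  have hAspec : A = U * Matrix.diagonal (fun i => (a i : ℂ)) * star U := by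
    have := hAh.spectral_theorem
    exact this
  set G : Matrix (Fin n) (Fin n) ℂ := star U * σ1 * U with hG_def
  have hGpsd : G.PosSemidef := by
    have := hσ1p.conjTranspose_mul_mul_same U
    rwa [← Matrix.star_eq_conjTranspose] at this
  set w : Fin n → ℝ := fun i => (G i i).re with hw_def
  have hw0 : ∀ i, 0 ≤ w i := fun i => psd_diag_nonneg hGpsd i
  have hGdiag : ∀ i, G i i = (w i : ℂ) := fun i => psd_diag_real hGpsd i
  have htG : G.trace = 1 := by
    rw [hG_def, Matrix.trace_mul_cycle, hUU, Matrix.one_mul, hσ1t]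
  have hsumw : ∑ i, w i = 1 := by
    have h1 : (G.trace).re = 1 := by rw [htG]; simp
    rw [Matrix.trace, Complex.re_sum] at h1
    exact h1
  -- the building-block matrices
  set Mi : Fin n → Matrix (Fin n) (Fin n) ℂ :=
    fun i => (r * U * Matrix.single i i (1:ℂ)) *
      (r * U * Matrix.single i i (1:ℂ))ᴴ with hMi_def
  have hMipsd : ∀ i, (Mi i).PosSemidef := fun i =>
    Matrix.posSemidef_self_mul_conjTranspose _
  have hMi_eq : ∀ i, Mi i = r * U * Matrix.single i i (1:ℂ) * (star U * r) := by
    intro i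
    simp only [hMi_def]
    rw [Matrix.conjTranspose_mul, stdBasis_conjTranspose, Matrix.conjTranspose_mul,
      ← Matrix.star_eq_conjTranspose U, hrh.eq]
    simp only [Matrix.mul_assoc]
    rw [← Matrix.mul_assoc (Matrix.single i i (1:ℂ))
      (Matrix.single i i (1:ℂ)) (star U * r),
      Matrix.single_mul_single_same, mul_one]
  have hGeq : (star U * r) * (r * U) = G := by
    calc (star U * r) * (r * U) = star U * (r * r) * U := by simp only [Matrix.mul_assoc]
      _ = G := by rw [hrr, hG_def]
  have htrMi : ∀ i, (Mi i).trace = (w i : ℂ) := by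
    intro i
    rw [hMi_eq i, Matrix.trace_mul_cycle, hGeq, Matrix.trace_mul_comm,
      trace_stdBasis_mul, hGdiag]
  have hMi0 : ∀ i, w i = 0 → Mi i = 0 := by
    intro i hw
    have h0 : ((r * U * Matrix.single i i (1:ℂ)) *
        (r * U * Matrix.single i i (1:ℂ))ᴴ).trace = 0 := by
      have := htrMi i
      simp only [hMi_def] at this
      rw [this, hw, Complex.ofReal_zero]
    have := trace_self_mul_conjTranspose_eq_zero _ h0
    simp only [hMi_def, this, Matrix.zero_mul]
  have hsumMi : ∑ i, Mi i = σ1 := by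
    calc ∑ i, Mi i
        = ∑ i, (r * U) * Matrix.single i i (1:ℂ) * (star U * r) :=
          Finset.sum_congr rfl fun i _ => hMi_eq i
      _ = (r * U) * (∑ i, Matrix.single i i (1:ℂ)) * (star U * r) := by
          rw [← Finset.sum_mul, ← Finset.mul_sum]
      _ = (r * U) * (star U * r) := by rw [sum_stdBasis, Matrix.mul_one]
      _ = σ1 := by
          rw [Matrix.mul_assoc, ← Matrix.mul_assoc U (star U) r, hUU,
            Matrix.one_mul, hrr]
  have hsumaMi : ∑ i, (a i : ℂ) • Mi i = σt := by
    calc ∑ i, (a i : ℂ) • Mi i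
        = ∑ i, (r * U) * ((a i : ℂ) • Matrix.single i i (1:ℂ)) * (star U * r) := by
          refine Finset.sum_congr rfl fun i _ => ?_
          rw [hMi_eq i, mul_smul_comm, smul_mul_assoc, Matrix.mul_assoc]
      _ = (r * U) * (∑ i, (a i : ℂ) • Matrix.single i i (1:ℂ)) * (star U * r) := by
          rw [← Finset.sum_mul, ← Finset.mul_sum]
      _ = (r * U) * Matrix.diagonal (fun i => (a i : ℂ)) * (star U * r) := by
          rw [sum_stdBasis_smul]
      _ = r * A * r := by rw [hAspec]; simp only [Matrix.mul_assoc]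
      _ = σt := hrAr
  -- trace identities
  set c : ℝ := 1 - σt.trace.re with hc_def
  have hσt_real : σt.trace = (σt.trace.re : ℂ) := herm_trace_real hσth
  have htrdiff : (σ0 - σt).trace = (c : ℂ) := by
    rw [Matrix.trace_sub, hσ0t, hσt_real, hc_def]
    push_cast
    ring
  have hc0 : 0 ≤ c := by
    have h1 := psd_trace_re_nonneg hdiff_psd
    rw [htrdiff] at h1
    simpa using h1
  have hfs : ∀ f : ℝ → ℝ, (σ1 * hermCFC f A).trace = ((∑ i, w i * f (a i) : ℝ) : ℂ) := by
    intro f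
    rw [trace_mul_hermCFC hAh σ1 f, ← hU_def, ← ha_def, ← hG_def]
    calc ∑ i, G i i * (f (a i) : ℂ) = ∑ i, ((w i * f (a i) : ℝ) : ℂ) := by
          refine Finset.sum_congr rfl fun i _ => ?_
          rw [hGdiag i]
          push_cast
          ring
      _ = ((∑ i, w i * f (a i) : ℝ) : ℂ) := by push_cast; ring
  have hSaw : ∑ i, w i * a i = σt.trace.re := by
    have h1 : (σ1 * hermCFC (fun x => x) A).trace = ((∑ i, w i * a i : ℝ) : ℂ) :=
      hfs (fun x => x)
    rw [hermCFC_id hAh] at h1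
    have h2 : σt.trace = (σ1 * A).trace := by
      rw [← hrAr, Matrix.trace_mul_cycle, hrr]
    apply Complex.ofReal_inj.mp
    rw [← h1, ← h2, ← hσt_real]
  -- the classical representation
  set ρex : Matrix (Fin n) (Fin n) ℂ := if c = 0 then σ1 else (c:ℂ)⁻¹ • (σ0 - σt)
    with hρex_def
  set ρ' : Fin n → Matrix (Fin n) (Fin n) ℂ :=
    fun i => if 0 < w i then ((w i : ℂ))⁻¹ • Mi i else σ1 with hρ'_def
  set q0v : Fin (n+1) → ℝ := Fin.lastCases c (fun i => a i * w i) with hq0v_def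
  set q1v : Fin (n+1) → ℝ := Fin.lastCases 0 w with hq1v_def
  set ρv : Fin (n+1) → Matrix (Fin n) (Fin n) ℂ := Fin.lastCases ρex ρ' with hρv_def
  refine ⟨n+1, q0v, q1v, ρv, ⟨?_, ?_⟩, ⟨?_, ?_⟩, ?_, ?_, ?_, ?_⟩
  · intro x
    simp only [hq0v_def]
    cases x using Fin.lastCases with
    | last => simpa using hc0
    | cast i => simpa using mul_nonneg (ha0 i) (hw0 i)
  · rw [Fin.sum_univ_castSucc]
    simp only [hq0v_def, Fin.lastCases_castSucc, Fin.lastCases_last]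
    have h1 : ∑ i, a i * w i = σt.trace.re := by
      rw [← hSaw]
      exact Finset.sum_congr rfl fun i _ => mul_comm _ _
    rw [h1, hc_def]
    ring
  · intro x
    simp only [hq1v_def]
    cases x using Fin.lastCases with
    | last => simp
    | cast i => simpa using hw0 i
  · rw [Fin.sum_univ_castSucc]
    simp only [hq1v_def, Fin.lastCases_castSucc, Fin.lastCases_last]
    rw [hsumw, add_zero]
  · intro x
    simp only [hρv_def]
    cases x using Fin.lastCases with
    | last =>
      simp only [Fin.lastCases_last, hρex_def]
      split_ifs with h
      · exact ⟨hσ1p, hσ1t⟩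
      · constructor
        · have := psd_smul_real hdiff_psd (inv_nonneg.mpr hc0)
          rwa [Complex.ofReal_inv] at this
        · rw [Matrix.trace_smul, htrdiff, smul_eq_mul,
            inv_mul_cancel₀ (Complex.ofReal_ne_zero.mpr h)]
    | cast i =>
      simp only [Fin.lastCases_castSucc, hρ'_def]
      split_ifs with h
      · constructor
        · have := psd_smul_real (hMipsd i) (inv_nonneg.mpr (hw0 i))
          rwa [Complex.ofReal_inv] at this
        · rw [Matrix.trace_smul, htrMi, smul_eq_mul,
            inv_mul_cancel₀ (Complex.ofReal_ne_zero.mpr (ne_of_gt h))]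
      · exact ⟨hσ1p, hσ1t⟩
  · -- cqApply ρ q0 = σ0
    rw [cqApply, Fin.sum_univ_castSucc]
    simp only [hq0v_def, hρv_def, Fin.lastCases_castSucc, Fin.lastCases_last]
    have hterm : ∀ i, ((a i * w i : ℝ) : ℂ) • ρ' i = (a i : ℂ) • Mi i := by
      intro i
      simp only [hρ'_def]
      split_ifs with h
      · rw [smul_smul]
        congr 1
        have hne : (w i : ℂ) ≠ 0 := Complex.ofReal_ne_zero.mpr (ne_of_gt h)
        push_cast
        rw [mul_assoc, mul_inv_cancel₀ hne, mul_one]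
      · have hwz : w i = 0 := le_antisymm (not_lt.mp h) (hw0 i)
        rw [hwz, hMi0 i hwz, smul_zero, mul_zero, Complex.ofReal_zero, zero_smul]
    have hsum1 : ∑ i, ((a i * w i : ℝ) : ℂ) • ρ' i = σt := by
      rw [Finset.sum_congr rfl fun i _ => hterm i, hsumaMi]
    have hlast : ((c : ℝ) : ℂ) • ρex = σ0 - σt := by
      rw [hρex_def]
      split_ifs with h
      · have hz : σ0 - σt = 0 := psd_trace_zero hdiff_psd (by rw [htrdiff, h]; simp)
        rw [h, hz, Complex.ofReal_zero, zero_smul]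
      · rw [smul_smul, mul_inv_cancel₀ (Complex.ofReal_ne_zero.mpr h), one_smul]
    rw [hsum1, hlast]
    abel
  · -- cqApply ρ q1 = σ1
    rw [cqApply, Fin.sum_univ_castSucc]
    simp only [hq1v_def, hρv_def, Fin.lastCases_castSucc, Fin.lastCases_last]
    have hterm : ∀ i, ((w i : ℝ) : ℂ) • ρ' i = Mi i := by
      intro i
      simp only [hρ'_def]
      split_ifs with h
      · rw [smul_smul, mul_inv_cancel₀ (Complex.ofReal_ne_zero.mpr (ne_of_gt h)), one_smul]
      · have hwz : w i = 0 := le_antisymm (not_lt.mp h) (hw0 i)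
        rw [hwz, hMi0 i hwz, Complex.ofReal_zero, zero_smul]
    rw [Finset.sum_congr rfl fun i _ => hterm i, hsumMi, Complex.ofReal_zero, zero_smul,
      add_zero]
  · -- the divergence identity
    intro f _ _
    have hre : (σ1 * hermCFC f A).trace.re = ∑ i, w i * f (a i) := by
      rw [hfs f, Complex.ofReal_re]
    have e1 : (∑ x : Fin (n+1), if 0 < q1v x then q1v x * f (q0v x / q1v x) else 0)
        = ∑ i, w i * f (a i) := by
      rw [Fin.sum_univ_castSucc]
      simp only [hq0v_def, hq1v_def, Fin.lastCases_castSucc, Fin.lastCases_last,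
        lt_self_iff_false, if_false, add_zero]
      refine Finset.sum_congr rfl fun i _ => ?_
      by_cases h : 0 < w i
      · rw [if_pos h, mul_div_assoc, div_self (ne_of_gt h), mul_one]
      · have hwz : w i = 0 := le_antisymm (not_lt.mp h) (hw0 i)
        rw [if_neg h, hwz, zero_mul]
    have e2 : (∑ x : Fin (n+1), if 0 < q1v x then 0 else q0v x) = c := by
      rw [Fin.sum_univ_castSucc]
      simp only [hq0v_def, hq1v_def, Fin.lastCases_castSucc, Fin.lastCases_last,
        lt_self_iff_false, if_false]
      have h1 : ∀ i : Fin n, (if 0 < w i then (0:ℝ) else a i * w i) = 0 := by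
        intro i
        split_ifs with h
        · rfl
        · rw [le_antisymm (not_lt.mp h) (hw0 i), mul_zero]
      rw [Finset.sum_congr rfl fun i _ => h1 i, Finset.sum_const_zero, zero_add]
    simp only [fDiv, Ff]
    rw [← hS1_def, ← hσt_def, ← hA_def, e1, e2, hre, hc_def]
end

section
/- Let X be a finite set and u the uniform probability vector on X. (a) A stochastic matrix P from X to X satisfies Pu = u if and only if P is doubly stochastic, i.e. additionally Σ_{x∈X} P(y|x) = 1 for every y ∈ X. (b) For probability vectors p, q on X, there exists a stochastic matrix P with Pp = q and Pu = u if and only if q lies in the convex hull of the set { p ∘ π : π a permutation of X }. -/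
open Matrix
open scoped Kronecker ComplexOrder

/-- (a) A stochastic matrix fixes the uniform distribution iff
it is doubly stochastic. (b) A stochastic matrix with `Pp = q`, `Pu = u` exists
iff `q` is in the convex hull of the permutations of `p`. -/
theorem fix_uniform_iff_doublyStochastic_and_majorization {X : Type*} [Fintype X] :
    (∀ P : X → X → ℝ, IsStochastic P →
      (stocApply P (fun _ => (1 : ℝ) / Fintype.card X) =
          (fun _ => (1 : ℝ) / Fintype.card X) ↔ ∀ y, ∑ x, P y x = 1)) ∧
    (∀ p q : X → ℝ, ProbVec p → ProbVec q →
      ((∃ P : X → X → ℝ, IsStochastic P ∧ stocApply P p = q ∧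
          stocApply P (fun _ => (1 : ℝ) / Fintype.card X) =
            (fun _ => (1 : ℝ) / Fintype.card X)) ↔
        q ∈ convexHull ℝ {r : X → ℝ | ∃ e : Equiv.Perm X, r = p ∘ e})) := by
  
  classical
  have parta : ∀ P : X → X → ℝ, IsStochastic P →
      (stocApply P (fun _ => (1 : ℝ) / Fintype.card X) =
          (fun _ => (1 : ℝ) / Fintype.card X) ↔ ∀ y, ∑ x, P y x = 1) := by
    intro P hP
    constructor
    · intro h y
      haveI : Nonempty X := ⟨y⟩
      have hn : (0:ℝ) < (Fintype.card X : ℝ) := by exact_mod_cast Fintype.card_pos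
      have hy := congrFun h y
      simp only [stocApply, ← Finset.sum_mul] at hy
      exact mul_right_cancel₀ (by positivity : (1:ℝ)/Fintype.card X ≠ 0)
        (hy.trans (one_mul _).symm)
    · intro h
      funext y
      simp only [stocApply, ← Finset.sum_mul, h y, one_mul]
  refine ⟨parta, ?_⟩
  intro p q hp hq
  constructor
  · rintro ⟨P, hP, hPp, hPu⟩
    have hrow : ∀ y, ∑ x, P y x = 1 := (parta P hP).mp hPu
    have hM : (Matrix.of P) ∈ doublyStochastic ℝ X := by
      rw [mem_doublyStochastic_iff_sum]
      exact ⟨fun i j => hP.1 i j, fun i => hrow i, fun j => hP.2 j⟩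
    obtain ⟨w, hw0, hw1, hwM⟩ := exists_eq_sum_perm_of_mem_doublyStochastic hM
    refine mem_convexHull_of_exists_fintype w (fun σ => p ∘ σ) hw0 hw1
      (fun σ => ⟨σ, rfl⟩) ?_
    funext y
    have hPyx : ∀ x, P y x = ∑ σ : Equiv.Perm X, w σ * (σ.permMatrix ℝ) y x := by
      intro x
      have := congrFun (congrFun hwM y) x
      simpa [Matrix.sum_apply] using this.symm
    have hqy : q y = ∑ x, P y x * p x := (congrFun hPp y).symm
    rw [Finset.sum_apply]
    rw [hqy]
    simp only [hPyx, Finset.sum_mul]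
    rw [Finset.sum_comm]
    refine Finset.sum_congr rfl fun σ _ => ?_
    simp only [Pi.smul_apply, Function.comp_apply, smul_eq_mul, mul_assoc,
      ← Finset.mul_sum]
    congr 1
    simp [Equiv.Perm.permMatrix, PEquiv.toMatrix_apply, Equiv.toPEquiv_apply,
      mul_comm]
  · intro hmem
    have hsub : {r : X → ℝ | ∃ e : Equiv.Perm X, r = p ∘ e} ⊆
        {q : X → ℝ | ∃ P : X → X → ℝ, IsStochastic P ∧ stocApply P p = q ∧
          stocApply P (fun _ => (1 : ℝ) / Fintype.card X) =
            (fun _ => (1 : ℝ) / Fintype.card X)} := by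
      rintro r ⟨e, rfl⟩
      refine ⟨fun y x => if x = e y then 1 else 0, ⟨fun y x => by positivity, ?_⟩, ?_, ?_⟩
      · intro x
        have : ∀ y : X, (if x = e y then (1:ℝ) else 0) = if y = e.symm x then 1 else 0 := by
          intro y
          congr 1
          simp [eq_comm, Equiv.eq_symm_apply]
        simp only [this]
        simp
      · funext y
        simp [stocApply]
      · funext y
        simp [stocApply]
    have hconv : Convex ℝ
        {q : X → ℝ | ∃ P : X → X → ℝ, IsStochastic P ∧ stocApply P p = q ∧
          stocApply P (fun _ => (1 : ℝ) / Fintype.card X) =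
            (fun _ => (1 : ℝ) / Fintype.card X)} := by
      rintro q1 ⟨P1, hP1, hP1p, hP1u⟩ q2 ⟨P2, hP2, hP2p, hP2u⟩ a b ha hb hab
      refine ⟨fun y x => a * P1 y x + b * P2 y x,
        ⟨fun y x => by have := hP1.1 y x; have := hP2.1 y x; positivity, ?_⟩, ?_, ?_⟩
      · intro x
        simp only [Finset.sum_add_distrib, ← Finset.mul_sum, hP1.2 x, hP2.2 x]
        simpa using hab
      · funext y
        have h1 := congrFun hP1p y
        have h2 := congrFun hP2p y
        simp only [stocApply] at h1 h2 ⊢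
        simp only [add_mul, Finset.sum_add_distrib, mul_assoc, ← Finset.mul_sum, h1, h2]
        simp [Pi.add_apply, Pi.smul_apply, smul_eq_mul]
      · funext y
        have h1 := congrFun hP1u y
        have h2 := congrFun hP2u y
        simp only [stocApply] at h1 h2 ⊢
        simp only [add_mul, Finset.sum_add_distrib, mul_assoc, ← Finset.mul_sum, h1, h2]
        rw [← add_mul, hab, one_mul]
    exact convexHull_min hsub hconv hmem
end
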